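/- arXiv:1312.6275 — 2 statements merged into one kernel-verified Lean document; each statement's English description precedes it below -/
import Mathlib

section
/- Every point a in the interior of Γ has a neighborhood U ⊂ ℝ² such that for every z ∈ K the map ã ↦ 𝔼_z[e^{ã·S(τ)}; τ < ∞] is finite on U. -/
open scoped ENNReal Classical

noncomputable section

namespace KilledRW

/-- The two-dimensional integer lattice. -/
abbrev Z2 := ℤ × ℤ

/-- The plane `ℝ²`. -/
abbrev R2 := ℝ × ℝ

/-- Euclidean dot product on `ℝ²`. -/
def dotR (a b : R2) : ℝ := a.1 * b.1 + a.2 * b.2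

/-- Embedding of the lattice into the plane. -/
def emb (z : Z2) : R2 := ((z.1 : ℝ), (z.2 : ℝ))

/-- Euclidean norm on `ℝ²`. -/
def nrm (x : R2) : ℝ := Real.sqrt (dotR x x)

/-- The jump generating function `φ(a) = Σ_z γ(z) e^{a·z}`. -/
def jgf (γ : Z2 → ℝ) (a : R2) : ℝ := ∑' z : Z2, γ z * Real.exp (dotR a (emb z))

/-- The gradient `∇φ(a) = Σ_z z γ(z) e^{a·z}` of the jump generating function. -/
def gradJgf (γ : Z2 → ℝ) (a : R2) : R2 :=
  (∑' z : Z2, γ z * Real.exp (dotR a (emb z)) * (z.1 : ℝ),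
   ∑' z : Z2, γ z * Real.exp (dotR a (emb z)) * (z.2 : ℝ))

/-- The normalized gradient `q(a) = ∇φ(a)/|∇φ(a)|`. -/
def qmap (γ : Z2 → ℝ) (a : R2) : R2 := (nrm (gradJgf γ a))⁻¹ • gradJgf γ a

/-- (Sub)stochastic transition kernel of the twisted random walk `S_a`:
`p_a(z,z') = γ(z'-z) e^{a·(z'-z)}`.  For `a = 0` this is the kernel of the original walk. -/
def twKer (γ : Z2 → ℝ) (a : R2) (z z' : Z2) : ℝ≥0∞ :=
  ENNReal.ofReal (γ (z' - z) * Real.exp (dotR a (emb (z' - z))))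

/-- `n`-step transition probabilities of the (sub)stochastic kernel `κ`. -/
def nstep (κ : Z2 → Z2 → ℝ≥0∞) : ℕ → Z2 → Z2 → ℝ≥0∞
  | 0, z, z' => if z' = z then 1 else 0
  | n + 1, z, z' => ∑' w : Z2, κ z w * nstep κ n w z'

/-- `exitP κ A n z z' = ℙ_z(τ_A = n, S(n) = z')`: the probability that the walk with kernel `κ`
started at `z` stays in `A` strictly before time `n` and is at `z' ∉ A` at time `n`
(where `τ_A = inf{n ≥ 0 : S(n) ∉ A}`). -/
def exitP (κ : Z2 → Z2 → ℝ≥0∞) (A : Set Z2) : ℕ → Z2 → Z2 → ℝ≥0∞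
  | 0, z, z' => if z' = z ∧ z ∉ A then 1 else 0
  | n + 1, z, z' => if z ∈ A then ∑' w : Z2, κ z w * exitP κ A n w z' else 0

/-- `aliveP κ A n z z' = ℙ_z(τ_A > n, S(n) = z')`. -/
def aliveP (κ : Z2 → Z2 → ℝ≥0∞) (A : Set Z2) : ℕ → Z2 → Z2 → ℝ≥0∞
  | 0, z, z' => if z' = z ∧ z ∈ A then 1 else 0
  | n + 1, z, z' => if z ∈ A then ∑' w : Z2, κ z w * aliveP κ A n w z' else 0

/-- `ℙ_z(τ_A < ∞)` for the walk with kernel `κ`. -/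
def exitTotal (κ : Z2 → Z2 → ℝ≥0∞) (A : Set Z2) (z : Z2) : ℝ≥0∞ :=
  ∑' n : ℕ, ∑' z' : Z2, exitP κ A n z z'

/-- `𝔼_z[g(S(τ_A)); τ_A < ∞]` for a nonnegative integrand, with values in `ℝ≥0∞`. -/
def exitLExp (κ : Z2 → Z2 → ℝ≥0∞) (A : Set Z2) (z : Z2) (g : Z2 → ℝ) : ℝ≥0∞ :=
  ∑' n : ℕ, ∑' z' : Z2, exitP κ A n z z' * ENNReal.ofReal (g z')

/-- `𝔼_z[g(S(τ_A)); τ_A < ∞]` for a signed integrand (positive part minus negative part). -/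
def exitExp (κ : Z2 → Z2 → ℝ≥0∞) (A : Set Z2) (z : Z2) (g : Z2 → ℝ) : ℝ :=
  (exitLExp κ A z g).toReal - (exitLExp κ A z fun w => -g w).toReal

/-- `𝔼_z[g(S(τ_A)); τ_A ≤ n]`, nonnegative version. -/
def exitLExpTrunc (κ : Z2 → Z2 → ℝ≥0∞) (A : Set Z2) (z : Z2) (g : Z2 → ℝ) (n : ℕ) : ℝ≥0∞ :=
  ∑ m ∈ Finset.range (n + 1), ∑' z' : Z2, exitP κ A m z z' * ENNReal.ofReal (g z')

/-- `𝔼_z[g(S(τ_A)); τ_A ≤ n]`, signed version. -/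
def exitExpTrunc (κ : Z2 → Z2 → ℝ≥0∞) (A : Set Z2) (z : Z2) (g : Z2 → ℝ) (n : ℕ) : ℝ :=
  (exitLExpTrunc κ A z g n).toReal - (exitLExpTrunc κ A z (fun w => -g w) n).toReal

/-- `𝔼_z[g(S(n)); τ_A > n]`, nonnegative version. -/
def aliveLExpAt (κ : Z2 → Z2 → ℝ≥0∞) (A : Set Z2) (z : Z2) (g : Z2 → ℝ) (n : ℕ) : ℝ≥0∞ :=
  ∑' z' : Z2, aliveP κ A n z z' * ENNReal.ofReal (g z')

/-- `𝔼_z[g(S(n)); τ_A > n]`, signed version. -/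
def aliveExpAt (κ : Z2 → Z2 → ℝ≥0∞) (A : Set Z2) (z : Z2) (g : Z2 → ℝ) (n : ℕ) : ℝ :=
  (aliveLExpAt κ A z g n).toReal - (aliveLExpAt κ A z (fun w => -g w) n).toReal

section Aux

variable {γ : Z2 → ℝ}

lemma dotR_emb_add (b : R2) (u z : Z2) :
    dotR b (emb (u + z)) = dotR b (emb u) + dotR b (emb z) := by
  simp only [dotR, emb, Prod.fst_add, Prod.snd_add]
  push_cast
  ring

lemma twKer_zero (z w : Z2) : twKer γ 0 z w = ENNReal.ofReal (γ (w - z)) := by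
  simp [twKer, dotR]

lemma jgf_nonneg (hγ0 : ∀ z, 0 ≤ γ z) (b : R2) : 0 ≤ jgf γ b :=
  tsum_nonneg fun z => mul_nonneg (hγ0 z) (Real.exp_nonneg _)

lemma step_bound (hγ0 : ∀ z, 0 ≤ γ z)
    (hA3 : ∀ a : R2, Summable fun z : Z2 => γ z * Real.exp (dotR a (emb z)))
    {b : R2} (hb : jgf γ b ≤ 1) (z : Z2) :
    ∑' w : Z2, twKer γ 0 z w * ENNReal.ofReal (Real.exp (dotR b (emb w)))
      ≤ ENNReal.ofReal (Real.exp (dotR b (emb z))) := by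
  have h1 : ∀ w : Z2, twKer γ 0 z w * ENNReal.ofReal (Real.exp (dotR b (emb w)))
      = ENNReal.ofReal (γ (w - z) * Real.exp (dotR b (emb w))) := by
    intro w
    rw [twKer_zero, ← ENNReal.ofReal_mul (hγ0 _)]
  calc ∑' w : Z2, twKer γ 0 z w * ENNReal.ofReal (Real.exp (dotR b (emb w)))
      = ∑' w : Z2, ENNReal.ofReal (γ (w - z) * Real.exp (dotR b (emb w))) := by
        exact tsum_congr h1
    _ = ∑' u : Z2, ENNReal.ofReal (γ u * (Real.exp (dotR b (emb u)) * Real.exp (dotR b (emb z)))) := by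
        rw [← (Equiv.addRight z).tsum_eq fun w => ENNReal.ofReal (γ (w - z) * Real.exp (dotR b (emb w)))]
        refine tsum_congr fun u => ?_
        simp only [Equiv.coe_addRight, add_sub_cancel_right]
        rw [dotR_emb_add, Real.exp_add]
    _ = ENNReal.ofReal (∑' u : Z2, γ u * Real.exp (dotR b (emb u)) * Real.exp (dotR b (emb z))) := by
        rw [ENNReal.ofReal_tsum_of_nonneg]
        · exact tsum_congr fun u => by rw [mul_assoc]
        · exact fun u => mul_nonneg (mul_nonneg (hγ0 u) (Real.exp_nonneg _)) (Real.exp_nonneg _)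
        · exact (hA3 b).mul_right _
    _ ≤ ENNReal.ofReal (Real.exp (dotR b (emb z))) := by
        apply ENNReal.ofReal_le_ofReal
        rw [tsum_mul_right]
        calc jgf γ b * Real.exp (dotR b (emb z)) ≤ 1 * Real.exp (dotR b (emb z)) :=
              mul_le_mul_of_nonneg_right hb (Real.exp_nonneg _)
          _ = _ := one_mul _

end Aux
section Aux2

variable {γ : Z2 → ℝ}

lemma exit0_bound (A : Set Z2) (z : Z2) (g' : Z2 → ℝ≥0∞) :
    ∑' z' : Z2, exitP (twKer γ 0) A 0 z z' * g' z' ≤ g' z := by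
  have h : ∀ z' : Z2, z' ≠ z → exitP (twKer γ 0) A 0 z z' * g' z' = 0 := by
    intro z' hz'
    have : exitP (twKer γ 0) A 0 z z' = 0 := by
      simp [exitP, hz']
    rw [this, zero_mul]
  rw [tsum_eq_single z h]
  have : exitP (twKer γ 0) A 0 z z ≤ 1 := by
    simp only [exitP]
    split <;> simp
  calc exitP (twKer γ 0) A 0 z z * g' z ≤ 1 * g' z :=
        mul_le_mul_left this _
    _ = g' z := one_mul _

lemma trunc_bound (hγ0 : ∀ z, 0 ≤ γ z)
    (hA3 : ∀ a : R2, Summable fun z : Z2 => γ z * Real.exp (dotR a (emb z)))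
    {b : R2} (hb : jgf γ b ≤ 1) (A : Set Z2) :
    ∀ n : ℕ, ∀ z : Z2,
      ∑ m ∈ Finset.range (n + 1), ∑' z' : Z2,
        exitP (twKer γ 0) A m z z' * ENNReal.ofReal (Real.exp (dotR b (emb z')))
      ≤ ENNReal.ofReal (Real.exp (dotR b (emb z))) := by
  set g' : Z2 → ℝ≥0∞ := fun x => ENNReal.ofReal (Real.exp (dotR b (emb x))) with hg'
  intro n
  induction n with
  | zero =>
    intro z
    simpa using exit0_bound A z g'
  | succ n ih =>
    intro z
    rw [Finset.sum_range_succ']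
    by_cases hz : z ∈ A
    · have h0 : ∑' z' : Z2, exitP (twKer γ 0) A 0 z z' * g' z' = 0 := by
        have : ∀ z' : Z2, exitP (twKer γ 0) A 0 z z' = 0 := by
          intro z'; simp [exitP, hz]
        simp [this]
      rw [h0, add_zero]
      have hrw : ∀ m ∈ Finset.range (n + 1),
          ∑' z' : Z2, exitP (twKer γ 0) A (m + 1) z z' * g' z'
            = ∑' w : Z2, twKer γ 0 z w * ∑' z' : Z2, exitP (twKer γ 0) A m w z' * g' z' := by
        intro m _
        have he : ∀ z' : Z2, exitP (twKer γ 0) A (m + 1) z z'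
            = ∑' w : Z2, twKer γ 0 z w * exitP (twKer γ 0) A m w z' := by
          intro z'; simp [exitP, hz]
        calc ∑' z' : Z2, exitP (twKer γ 0) A (m + 1) z z' * g' z'
            = ∑' z' : Z2, ∑' w : Z2, twKer γ 0 z w * exitP (twKer γ 0) A m w z' * g' z' := by
              refine tsum_congr fun z' => ?_
              rw [he z', ENNReal.tsum_mul_right]
          _ = ∑' w : Z2, ∑' z' : Z2, twKer γ 0 z w * exitP (twKer γ 0) A m w z' * g' z' :=
              ENNReal.tsum_comm
          _ = ∑' w : Z2, twKer γ 0 z w * ∑' z' : Z2, exitP (twKer γ 0) A m w z' * g' z' := by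
              refine tsum_congr fun w => ?_
              rw [← ENNReal.tsum_mul_left]
              exact tsum_congr fun z' => by rw [mul_assoc]
      rw [Finset.sum_congr rfl hrw]
      calc ∑ m ∈ Finset.range (n + 1), ∑' w : Z2,
              twKer γ 0 z w * ∑' z' : Z2, exitP (twKer γ 0) A m w z' * g' z'
          = ∑' w : Z2, ∑ m ∈ Finset.range (n + 1),
              twKer γ 0 z w * ∑' z' : Z2, exitP (twKer γ 0) A m w z' * g' z' :=
            (Summable.tsum_finsetSum fun _ _ => ENNReal.summable).symm
        _ = ∑' w : Z2, twKer γ 0 z w * ∑ m ∈ Finset.range (n + 1),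
              ∑' z' : Z2, exitP (twKer γ 0) A m w z' * g' z' := by
            exact tsum_congr fun w => (Finset.mul_sum _ _ _).symm
        _ ≤ ∑' w : Z2, twKer γ 0 z w * g' w :=
            ENNReal.tsum_le_tsum fun w => mul_le_mul_right (ih w) _
        _ ≤ g' z := step_bound hγ0 hA3 hb z
    · have h1 : ∀ m ∈ Finset.range (n + 1),
          ∑' z' : Z2, exitP (twKer γ 0) A (m + 1) z z' * g' z' = 0 := by
        intro m _
        have : ∀ z' : Z2, exitP (twKer γ 0) A (m + 1) z z' = 0 := by
          intro z'; simp [exitP, hz]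
        simp [this]
      rw [Finset.sum_congr rfl h1]
      simpa using exit0_bound A z g'

lemma exitLExp_le (hγ0 : ∀ z, 0 ≤ γ z)
    (hA3 : ∀ a : R2, Summable fun z : Z2 => γ z * Real.exp (dotR a (emb z)))
    {b : R2} (hb : jgf γ b ≤ 1) (A : Set Z2) (z : Z2) :
    exitLExp (twKer γ 0) A z (fun z' => Real.exp (dotR b (emb z')))
      ≤ ENNReal.ofReal (Real.exp (dotR b (emb z))) := by
  refine Summable.tsum_le_of_sum_range_le ENNReal.summable fun n => ?_
  cases n with
  | zero => simp
  | succ n => exact trunc_bound hγ0 hA3 hb A n z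

end Aux2
section Aux3

lemma exitP_support (κ : Z2 → Z2 → ℝ≥0∞) (A : Set Z2) :
    ∀ m : ℕ, ∀ z z' : Z2, exitP κ A m z z' ≠ 0 → z' ∉ A := by
  intro m
  induction m with
  | zero =>
    intro z z' h
    by_contra hz'
    apply h
    simp only [exitP]
    rw [if_neg]
    rintro ⟨rfl, hzA⟩
    exact hzA hz'
  | succ m ih =>
    intro z z' h
    simp only [exitP] at h
    by_cases hz : z ∈ A
    · rw [if_pos hz] at h
      obtain ⟨w, hw⟩ : ∃ w : Z2, κ z w * exitP κ A m w z' ≠ 0 := by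
        by_contra hc
        push_neg at hc
        exact h (by simp [hc])
      exact ih w z' fun h0 => hw (by rw [h0, mul_zero])
    · exact absurd (if_neg hz) h

lemma exitLExp_split (κ : Z2 → Z2 → ℝ≥0∞) (A : Set Z2) (z : Z2)
    (g g0 g1 : Z2 → ℝ)
    (h : ∀ z' : Z2, z' ∉ A → g z' ≤ g0 z' ∨ g z' ≤ g1 z') :
    exitLExp κ A z g ≤ exitLExp κ A z g0 + exitLExp κ A z g1 := by
  have hpt : ∀ n : ℕ, ∀ z' : Z2,
      exitP κ A n z z' * ENNReal.ofReal (g z')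
        ≤ exitP κ A n z z' * ENNReal.ofReal (g0 z')
          + exitP κ A n z z' * ENNReal.ofReal (g1 z') := by
    intro n z'
    by_cases he : exitP κ A n z z' = 0
    · simp [he]
    · rcases h z' (exitP_support κ A n z z' he) with h' | h'
      · exact le_add_right (mul_le_mul_right (ENNReal.ofReal_le_ofReal h') _)
      · exact le_add_left (mul_le_mul_right (ENNReal.ofReal_le_ofReal h') _)
  calc exitLExp κ A z g
      ≤ ∑' n : ℕ, ∑' z' : Z2, (exitP κ A n z z' * ENNReal.ofReal (g0 z')
          + exitP κ A n z z' * ENNReal.ofReal (g1 z')) :=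
        ENNReal.tsum_le_tsum fun n => ENNReal.tsum_le_tsum fun z' => hpt n z'
    _ = exitLExp κ A z g0 + exitLExp κ A z g1 := by
        unfold exitLExp
        rw [← ENNReal.tsum_add]
        exact tsum_congr fun n => ENNReal.tsum_add

end Aux3
section Aux4

variable {γ : Z2 → ℝ}

lemma dotR_combo (p q : ℝ) (x y w : R2) :
    dotR (p • x + q • y) w = p * dotR x w + q * dotR y w := by
  simp only [dotR, Prod.fst_add, Prod.snd_add, Prod.smul_fst, Prod.smul_snd, smul_eq_mul]
  ring

lemma dotR_sub_smul (a v : R2) (c : ℝ) (w : R2) :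
    dotR (a - c • v) w = dotR a w - c * dotR v w := by
  simp only [dotR, Prod.fst_sub, Prod.snd_sub, Prod.smul_fst, Prod.smul_snd, smul_eq_mul]
  ring

lemma dotR_add_smul (a v : R2) (c : ℝ) (w : R2) :
    dotR (a + c • v) w = dotR a w + c * dotR v w := by
  simp only [dotR, Prod.fst_add, Prod.snd_add, Prod.smul_fst, Prod.smul_snd, smul_eq_mul]
  ring

lemma dotR_smul_right (v : R2) (c : ℝ) (w : R2) : dotR v (c • w) = c * dotR v w := by
  simp only [dotR, Prod.smul_fst, Prod.smul_snd, smul_eq_mul]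
  ring

lemma abs_le_exp_add (s : ℝ) : |s| ≤ Real.exp s + Real.exp (-s) := by
  rcases le_or_gt 0 s with h | h
  · rw [abs_of_nonneg h]
    have h1 := Real.add_one_le_exp s
    have h2 := Real.exp_pos (-s)
    linarith
  · rw [abs_of_neg h]
    have h1 := Real.add_one_le_exp (-s)
    have h2 := Real.exp_pos s
    linarith

lemma exp_abs_le (s : ℝ) : Real.exp |s| ≤ Real.exp s + Real.exp (-s) := by
  rcases le_or_gt 0 s with h | h
  · rw [abs_of_nonneg h]
    have h2 := Real.exp_pos (-s)
    linarith
  · rw [abs_of_neg h]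
    have h2 := Real.exp_pos s
    linarith

lemma sq_le_four_mul_exp_abs (t : ℝ) : t ^ 2 ≤ 4 * Real.exp |t| := by
  have h1 := Real.add_one_le_exp (|t| / 2)
  have h2 : Real.exp (|t| / 2) * Real.exp (|t| / 2) = Real.exp |t| := by
    rw [← Real.exp_add]; ring_nf
  have h3 : 0 ≤ |t| := abs_nonneg t
  nlinarith [sq_abs t, Real.exp_pos (|t| / 2)]

lemma exp_neg_quadratic (u : ℝ) : Real.exp (-u) ≤ 1 - u + u ^ 2 * Real.exp |u| := by
  rcases le_or_gt (|u|) 1 with h | h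
  · have hb := Real.exp_bound (x := -u) (by rwa [abs_neg]) (n := 2) (by norm_num)
    have hsum : ∑ m ∈ Finset.range 2, (-u) ^ m / (m.factorial : ℝ) = 1 - u := by
      norm_num [Finset.sum_range_succ]
      ring
    rw [hsum, abs_neg] at hb
    have h1 : Real.exp (-u) - (1 - u) ≤ |u| ^ 2 * ((3 : ℝ) / (2 * 2)) := by
      have := (abs_sub_le_iff.mp hb).1
      have hfac : ((Nat.succ 2 : ℕ) : ℝ) / ((Nat.factorial 2 : ℕ) * 2) = (3 : ℝ) / (2 * 2) := by
        norm_num [Nat.factorial]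
      calc Real.exp (-u) - (1 - u) ≤ |u| ^ 2 * ((Nat.succ 2 : ℕ) / ((Nat.factorial 2 : ℕ) * 2)) := this
        _ = |u| ^ 2 * ((3 : ℝ) / (2 * 2)) := by rw [hfac]
    have h2 : (1 : ℝ) ≤ Real.exp |u| := Real.one_le_exp (abs_nonneg u)
    nlinarith [sq_abs u, sq_nonneg u]
  · rcases le_or_gt 0 u with hu | hu
    · have hu1 : 1 < u := by rwa [abs_of_nonneg hu] at h
      have h1 : Real.exp (-u) ≤ 1 := Real.exp_le_one_iff.mpr (by linarith)
      have h2 : (1 : ℝ) ≤ Real.exp |u| := Real.one_le_exp (abs_nonneg u)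
      nlinarith
    · have hu1 : 1 < -u := by rwa [abs_of_neg hu] at h
      have h2 : Real.exp |u| = Real.exp (-u) := by rw [abs_of_neg hu]
      rw [h2]
      have h3 := Real.exp_pos (-u)
      have h4 : (0:ℝ) < u ^ 2 - 1 := by nlinarith
      nlinarith [mul_pos h3 h4]
end Aux4
section Aux5

variable {γ : Z2 → ℝ}

lemma exp_neg_mul_le {lam : ℝ} (h0 : 0 ≤ lam) (h1 : lam ≤ 1) (t : ℝ) :
    Real.exp (-(lam * t)) ≤ 1 - lam * t
      + 4 * lam ^ 2 * (Real.exp (2 * t) + Real.exp (-(2 * t))) := by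
  have hq := exp_neg_quadratic (lam * t)
  have habs : |lam * t| ≤ |t| := by
    rw [abs_mul, abs_of_nonneg h0]
    calc lam * |t| ≤ 1 * |t| := mul_le_mul_of_nonneg_right h1 (abs_nonneg t)
      _ = |t| := one_mul _
  have h2 : (lam * t) ^ 2 * Real.exp |lam * t| ≤ lam ^ 2 * (t ^ 2 * Real.exp |t|) := by
    have := Real.exp_le_exp.mpr habs
    have hsq : (lam * t) ^ 2 = lam ^ 2 * t ^ 2 := by ring
    rw [hsq, mul_assoc]
    exact mul_le_mul_of_nonneg_left
      (mul_le_mul_of_nonneg_left this (sq_nonneg t)) (sq_nonneg lam)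
  have h3 : t ^ 2 * Real.exp |t| ≤ 4 * (Real.exp (2 * t) + Real.exp (-(2 * t))) := by
    have h4 := sq_le_four_mul_exp_abs t
    have h5 : Real.exp |t| * Real.exp |t| = Real.exp (2 * |t|) := by
      rw [← Real.exp_add]; ring_nf
    have h6 : Real.exp (2 * |t|) ≤ Real.exp (2 * t) + Real.exp (-(2 * t)) := by
      have := exp_abs_le (2 * t)
      rwa [abs_mul, abs_of_nonneg (by norm_num : (0:ℝ) ≤ 2)] at this
    calc t ^ 2 * Real.exp |t| ≤ 4 * Real.exp |t| * Real.exp |t| :=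
          mul_le_mul_of_nonneg_right h4 (Real.exp_nonneg _) |>.trans_eq (by ring)
      _ = 4 * Real.exp (2 * |t|) := by rw [mul_assoc, h5]
      _ ≤ 4 * (Real.exp (2 * t) + Real.exp (-(2 * t))) := by linarith
  have h7 : lam ^ 2 * (t ^ 2 * Real.exp |t|)
      ≤ 4 * lam ^ 2 * (Real.exp (2 * t) + Real.exp (-(2 * t))) := by
    calc lam ^ 2 * (t ^ 2 * Real.exp |t|)
        ≤ lam ^ 2 * (4 * (Real.exp (2 * t) + Real.exp (-(2 * t)))) :=
          mul_le_mul_of_nonneg_left h3 (sq_nonneg lam)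
      _ = 4 * lam ^ 2 * (Real.exp (2 * t) + Real.exp (-(2 * t))) := by ring
  linarith

lemma summable_T_mul_dot (hγ0 : ∀ z, 0 ≤ γ z)
    (hA3 : ∀ a : R2, Summable fun z : Z2 => γ z * Real.exp (dotR a (emb z)))
    (a v : R2) :
    Summable fun z : Z2 => γ z * Real.exp (dotR a (emb z)) * dotR v (emb z) := by
  have hsum : Summable fun z : Z2 =>
      γ z * Real.exp (dotR a (emb z)) * (Real.exp (dotR v (emb z)) + Real.exp (-dotR v (emb z))) := by
    have h1 : (fun z : Z2 => γ z * Real.exp (dotR a (emb z))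
        * (Real.exp (dotR v (emb z)) + Real.exp (-dotR v (emb z))))
        = fun z : Z2 => γ z * Real.exp (dotR (a + (1:ℝ) • v) (emb z))
          + γ z * Real.exp (dotR (a - (1:ℝ) • v) (emb z)) := by
      funext z
      rw [dotR_add_smul, dotR_sub_smul, one_mul, Real.exp_add, Real.exp_sub]
      rw [Real.exp_neg]
      field_simp
    rw [h1]
    exact (hA3 _).add (hA3 _)
  apply Summable.of_abs
  apply Summable.of_nonneg_of_le (fun z => abs_nonneg _) _ hsum
  intro z
  rw [abs_mul, abs_of_nonneg (mul_nonneg (hγ0 z) (Real.exp_nonneg _))]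
  exact mul_le_mul_of_nonneg_left (abs_le_exp_add _)
    (mul_nonneg (hγ0 z) (Real.exp_nonneg _))

lemma jgf_convexOn (hγ0 : ∀ z, 0 ≤ γ z)
    (hA3 : ∀ a : R2, Summable fun z : Z2 => γ z * Real.exp (dotR a (emb z))) :
    ConvexOn ℝ Set.univ (jgf γ) := by
  refine ⟨convex_univ, fun x _ y _ p q hp hq hpq => ?_⟩
  have hpt : ∀ z : Z2, γ z * Real.exp (dotR (p • x + q • y) (emb z))
      ≤ p * (γ z * Real.exp (dotR x (emb z))) + q * (γ z * Real.exp (dotR y (emb z))) := by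
    intro z
    have hexp : Real.exp (p * dotR x (emb z) + q * dotR y (emb z))
        ≤ p * Real.exp (dotR x (emb z)) + q * Real.exp (dotR y (emb z)) := by
      have := convexOn_exp.2 (Set.mem_univ (dotR x (emb z))) (Set.mem_univ (dotR y (emb z)))
        hp hq hpq
      simpa [smul_eq_mul] using this
    rw [dotR_combo]
    calc γ z * Real.exp (p * dotR x (emb z) + q * dotR y (emb z))
        ≤ γ z * (p * Real.exp (dotR x (emb z)) + q * Real.exp (dotR y (emb z))) :=
          mul_le_mul_of_nonneg_left hexp (hγ0 z)
      _ = p * (γ z * Real.exp (dotR x (emb z))) + q * (γ z * Real.exp (dotR y (emb z))) := by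
          ring
  have hsumR : Summable fun z : Z2 => p * (γ z * Real.exp (dotR x (emb z)))
      + q * (γ z * Real.exp (dotR y (emb z))) :=
    ((hA3 x).mul_left p).add ((hA3 y).mul_left q)
  calc jgf γ (p • x + q • y)
      ≤ ∑' z : Z2, (p * (γ z * Real.exp (dotR x (emb z)))
          + q * (γ z * Real.exp (dotR y (emb z)))) :=
        Summable.tsum_le_tsum hpt (hA3 _) hsumR
    _ = p * jgf γ x + q * jgf γ y := by
        rw [Summable.tsum_add ((hA3 x).mul_left p) ((hA3 y).mul_left q),
          tsum_mul_left, tsum_mul_left]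
        rfl
    _ = p • jgf γ x + q • jgf γ y := by simp [smul_eq_mul]

lemma jgf_continuous (hγ0 : ∀ z, 0 ≤ γ z)
    (hA3 : ∀ a : R2, Summable fun z : Z2 => γ z * Real.exp (dotR a (emb z))) :
    Continuous (jgf γ) := by
  rw [← continuousOn_univ]
  exact (jgf_convexOn hγ0 hA3).continuousOn isOpen_univ

lemma jgf_sub_smul_le (hγ0 : ∀ z, 0 ≤ γ z)
    (hA3 : ∀ a : R2, Summable fun z : Z2 => γ z * Real.exp (dotR a (emb z)))
    (a v : R2) {lam : ℝ} (h0 : 0 ≤ lam) (h1 : lam ≤ 1) :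
    jgf γ (a - lam • v) ≤ jgf γ a
      - lam * (∑' z : Z2, γ z * Real.exp (dotR a (emb z)) * dotR v (emb z))
      + 4 * lam ^ 2 * (jgf γ (a + (2:ℝ) • v) + jgf γ (a - (2:ℝ) • v)) := by
  set T : Z2 → ℝ := fun z => γ z * Real.exp (dotR a (emb z)) with hT
  have hTnn : ∀ z, 0 ≤ T z := fun z => mul_nonneg (hγ0 z) (Real.exp_nonneg _)
  have ep : (fun z : Z2 => T z * Real.exp (2 * dotR v (emb z)))
      = fun z : Z2 => γ z * Real.exp (dotR (a + (2:ℝ) • v) (emb z)) := by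
    funext z; rw [hT]; rw [dotR_add_smul, Real.exp_add]; ring
  have em : (fun z : Z2 => T z * Real.exp (-(2 * dotR v (emb z))))
      = fun z : Z2 => γ z * Real.exp (dotR (a - (2:ℝ) • v) (emb z)) := by
    funext z; rw [hT]; rw [dotR_sub_smul, sub_eq_add_neg, Real.exp_add]; ring_nf
  have hsp : Summable fun z : Z2 => T z * Real.exp (2 * dotR v (emb z)) := by
    rw [ep]; exact hA3 _
  have hsm : Summable fun z : Z2 => T z * Real.exp (-(2 * dotR v (emb z))) := by
    rw [em]; exact hA3 _
  have hst : Summable fun z : Z2 => T z * dotR v (emb z) := summable_T_mul_dot hγ0 hA3 a v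
  have hR : Summable fun z : Z2 => T z - lam * (T z * dotR v (emb z))
      + 4 * lam ^ 2 * (T z * Real.exp (2 * dotR v (emb z)) + T z * Real.exp (-(2 * dotR v (emb z)))) :=
    ((hA3 a).sub (hst.mul_left lam)).add ((hsp.add hsm).mul_left _)
  have hpt : ∀ z : Z2, γ z * Real.exp (dotR (a - lam • v) (emb z))
      ≤ T z - lam * (T z * dotR v (emb z))
        + 4 * lam ^ 2 * (T z * Real.exp (2 * dotR v (emb z)) + T z * Real.exp (-(2 * dotR v (emb z)))) := by
    intro z
    have hd : dotR (a - lam • v) (emb z) = dotR a (emb z) + (-(lam * dotR v (emb z))) := by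
      rw [dotR_sub_smul]; ring
    rw [hd, Real.exp_add]
    have := exp_neg_mul_le h0 h1 (dotR v (emb z))
    calc γ z * (Real.exp (dotR a (emb z)) * Real.exp (-(lam * dotR v (emb z))))
        = T z * Real.exp (-(lam * dotR v (emb z))) := by rw [hT]; ring
      _ ≤ T z * (1 - lam * dotR v (emb z)
          + 4 * lam ^ 2 * (Real.exp (2 * dotR v (emb z)) + Real.exp (-(2 * dotR v (emb z))))) :=
          mul_le_mul_of_nonneg_left this (hTnn z)
      _ = T z - lam * (T z * dotR v (emb z))
          + 4 * lam ^ 2 * (T z * Real.exp (2 * dotR v (emb z))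
            + T z * Real.exp (-(2 * dotR v (emb z)))) := by ring
  calc jgf γ (a - lam • v) ≤ ∑' z : Z2, (T z - lam * (T z * dotR v (emb z))
        + 4 * lam ^ 2 * (T z * Real.exp (2 * dotR v (emb z))
          + T z * Real.exp (-(2 * dotR v (emb z))))) :=
        Summable.tsum_le_tsum hpt (hA3 _) hR
    _ = jgf γ a - lam * (∑' z : Z2, T z * dotR v (emb z))
        + 4 * lam ^ 2 * (jgf γ (a + (2:ℝ) • v) + jgf γ (a - (2:ℝ) • v)) := by
        rw [Summable.tsum_add ((hA3 a).sub (hst.mul_left lam)) ((hsp.add hsm).mul_left _),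
          Summable.tsum_sub (hA3 a) (hst.mul_left lam), tsum_mul_left, tsum_mul_left,
          Summable.tsum_add hsp hsm, ep, em]
        rfl
end Aux5
section Aux6

variable {γ : Z2 → ℝ}

lemma dot_grad_eq (hγ0 : ∀ z, 0 ≤ γ z)
    (hA3 : ∀ a : R2, Summable fun z : Z2 => γ z * Real.exp (dotR a (emb z)))
    (a v : R2) :
    dotR v (gradJgf γ a) = ∑' z : Z2, γ z * Real.exp (dotR a (emb z)) * dotR v (emb z) := by
  have e1 : (fun z : Z2 => γ z * Real.exp (dotR a (emb z)) * dotR ((1:ℝ), (0:ℝ)) (emb z))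
      = fun z : Z2 => γ z * Real.exp (dotR a (emb z)) * (z.1 : ℝ) := by
    funext z; simp [dotR, emb]
  have e2 : (fun z : Z2 => γ z * Real.exp (dotR a (emb z)) * dotR ((0:ℝ), (1:ℝ)) (emb z))
      = fun z : Z2 => γ z * Real.exp (dotR a (emb z)) * (z.2 : ℝ) := by
    funext z; simp [dotR, emb]
  have hs1 : Summable fun z : Z2 => γ z * Real.exp (dotR a (emb z)) * (z.1 : ℝ) := by
    rw [← e1]; exact summable_T_mul_dot hγ0 hA3 a _
  have hs2 : Summable fun z : Z2 => γ z * Real.exp (dotR a (emb z)) * (z.2 : ℝ) := by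
    rw [← e2]; exact summable_T_mul_dot hγ0 hA3 a _
  have : dotR v (gradJgf γ a)
      = v.1 * ∑' z : Z2, γ z * Real.exp (dotR a (emb z)) * (z.1 : ℝ)
        + v.2 * ∑' z : Z2, γ z * Real.exp (dotR a (emb z)) * (z.2 : ℝ) := rfl
  rw [this, ← tsum_mul_left, ← tsum_mul_left, ← Summable.tsum_add (hs1.mul_left _) (hs2.mul_left _)]
  refine tsum_congr fun z => ?_
  simp only [dotR, emb]
  ring

lemma dot_grad_pos {f : Fin 2 → R2} {K : Set R2}
    (hK : K = {x : R2 | ∀ i, 0 < dotR (f i) x}) {a : R2}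
    (haq : qmap γ a ∈ K) (i : Fin 2) : 0 < dotR (f i) (gradJgf γ a) := by
  rw [hK] at haq
  have hi := haq i
  rw [qmap, dotR_smul_right] at hi
  have hnn : 0 ≤ (nrm (gradJgf γ a))⁻¹ := inv_nonneg.mpr (Real.sqrt_nonneg _)
  by_contra h
  push_neg at h
  have : (nrm (gradJgf γ a))⁻¹ * dotR (f i) (gradJgf γ a) ≤ 0 :=
    mul_nonpos_of_nonneg_of_nonpos hnn h
  linarith

end Aux6
/-- **Lemma 2.** Every point `a` in the interior of `Γ` (i.e. `a ∈ ∂D` with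
`q(a)` in the interior of `Σ`, equivalently `q(a) ∈ K`) has a neighborhood `U` such that
for every `z ∈ K` the map `ã ↦ 𝔼_z[e^{ã·S(τ)}; τ < ∞]` is finite on `U`. -/
theorem exists_nhd_finite_exit_exp
    (γ : Z2 → ℝ) (c f : Fin 2 → R2) (K : Set R2)
    -- `γ` is a probability distribution on `ℤ²`
    (hγ0 : ∀ z : Z2, 0 ≤ γ z) (hγ1 : HasSum γ 1)
    -- `c 0, c 1` are unit vectors, `f i` is the unit vector perpendicular to `c i`
    -- pointing into the cone; the angle between `c 0` and `c 1` lies in `(0, π)`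
    (hcUnit : ∀ i, nrm (c i) = 1) (hfUnit : ∀ i, nrm (f i) = 1)
    (hperp : ∀ i, dotR (f i) (c i) = 0)
    (hinward : ∀ i j, i ≠ j → 0 < dotR (f i) (c j))
    -- `K` is the open convex cone bounded by the rays through `c 0` and `c 1`
    (hK : K = {x : R2 | ∀ i, 0 < dotR (f i) x})
    -- (A1) the walk is irreducible with nonzero mean
    (hA1 : ∀ z z' : Z2, ∃ n : ℕ, 0 < nstep (twKer γ 0) n z z')
    (hmean : (∑' z : Z2, γ z * (z.1 : ℝ), ∑' z : Z2, γ z * (z.2 : ℝ)) ≠ (0, 0))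
    -- (A2) the walk killed when leaving `K` is irreducible in `K`
    (hA2 : ∀ z z' : Z2, emb z ∈ K → emb z' ∈ K →
        ∃ n : ℕ, 0 < aliveP (twKer γ 0) (emb ⁻¹' K) n z z')
    -- (A3) the jump generating function is finite everywhere
    (hA3 : ∀ a : R2, Summable fun z : Z2 => γ z * Real.exp (dotR a (emb z)))
    -- (A4) the projections `fᵢ·S(n)` are aperiodic random walks
    (hA4 : ∀ i : Fin 2, ∀ d : ℕ,
        (∀ n : ℕ, 0 < n →
          0 < ∑' z : Z2, (if dotR (f i) (emb z) = 0 then nstep (twKer γ 0) n 0 z else 0) →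
          d ∣ n) → d = 1)
    -- `a` in the interior of `Γ`
    (a : R2) (haD : jgf γ a = 1) (haq : qmap γ a ∈ K) :
    ∃ U : Set R2, U ∈ nhds a ∧ ∀ b ∈ U, ∀ z : Z2, emb z ∈ K →
      exitLExp (twKer γ 0) (emb ⁻¹' K) z (fun z' => Real.exp (dotR b (emb z'))) ≠ ⊤ := by
  -- positive drift in the directions f i
  set m : Fin 2 → ℝ := fun i => ∑' z : Z2, γ z * Real.exp (dotR a (emb z)) * dotR (f i) (emb z)
    with hm_def
  have hm : ∀ i, 0 < m i := by
    intro i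
    rw [hm_def]
    simp only
    rw [← dot_grad_eq hγ0 hA3]
    exact dot_grad_pos hK haq i
  set M : Fin 2 → ℝ := fun i => jgf γ (a + (2:ℝ) • f i) + jgf γ (a - (2:ℝ) • f i) with hM_def
  have hM0 : ∀ i, 0 ≤ M i := fun i => add_nonneg (jgf_nonneg hγ0 _) (jgf_nonneg hγ0 _)
  set lam : ℝ := min 1 (min (m 0 / (8 * (M 0 + 1))) (m 1 / (8 * (M 1 + 1)))) with hlam_def
  have hden : ∀ i, (0:ℝ) < 8 * (M i + 1) := by intro i; have := hM0 i; linarith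
  have hlam0 : 0 < lam :=
    lt_min one_pos (lt_min (div_pos (hm 0) (hden 0)) (div_pos (hm 1) (hden 1)))
  have hlam1 : lam ≤ 1 := min_le_left _ _
  have hlami : ∀ i : Fin 2, lam ≤ m i / (8 * (M i + 1)) := by
    have h0 : lam ≤ m 0 / (8 * (M 0 + 1)) := (min_le_right _ _).trans (min_le_left _ _)
    have h1 : lam ≤ m 1 / (8 * (M 1 + 1)) := (min_le_right _ _).trans (min_le_right _ _)
    intro i
    fin_cases i
    · exact h0
    · exact h1
  have hlt : ∀ i : Fin 2, jgf γ (a - lam • f i) < 1 := by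
    intro i
    have hb := jgf_sub_smul_le hγ0 hA3 a (f i) hlam0.le hlam1
    rw [haD] at hb
    have hle' : lam * (8 * (M i + 1)) ≤ m i := (le_div_iff₀ (hden i)).mp (hlami i)
    have hq : 4 * lam ^ 2 * (M i) < lam * m i := by
      nlinarith [mul_le_mul_of_nonneg_left hle' hlam0.le, mul_pos hlam0 (hm i),
        mul_pos hlam0 hlam0, hM0 i]
    calc jgf γ (a - lam • f i)
        ≤ 1 - lam * m i + 4 * lam ^ 2 * M i := hb
      _ < 1 := by linarith
  -- the neighborhood
  set U : Set R2 := {b | ∀ i : Fin 2, jgf γ (b - lam • f i) < 1} with hU_def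
  have hUopen : IsOpen U := by
    have : U = ⋂ i : Fin 2, (fun b : R2 => jgf γ (b - lam • f i)) ⁻¹' Set.Iio 1 := by
      ext b
      simp [hU_def, Set.mem_iInter]
    rw [this]
    exact isOpen_iInter_of_finite fun i =>
      ((jgf_continuous hγ0 hA3).comp (continuous_id.sub continuous_const)).isOpen_preimage
        _ isOpen_Iio
  refine ⟨U, hUopen.mem_nhds hlt, ?_⟩
  intro b hb z _
  have hble : ∀ i : Fin 2, jgf γ (b - lam • f i) ≤ 1 := fun i => (hb i).le
  -- splitting of the integrand on the complement of the cone
  have key : ∀ z' : Z2, z' ∉ emb ⁻¹' K →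
      Real.exp (dotR b (emb z')) ≤ Real.exp (dotR (b - lam • f 0) (emb z')) ∨
      Real.exp (dotR b (emb z')) ≤ Real.exp (dotR (b - lam • f 1) (emb z')) := by
    intro z' hz'
    have hnot : ¬ ∀ i : Fin 2, 0 < dotR (f i) (emb z') := by
      intro hall
      exact hz' (by rw [Set.mem_preimage, hK]; exact hall)
    push_neg at hnot
    obtain ⟨i, hi⟩ := hnot
    have hle : ∀ j : Fin 2, dotR (f j) (emb z') ≤ 0 →
        Real.exp (dotR b (emb z')) ≤ Real.exp (dotR (b - lam • f j) (emb z')) := by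
      intro j hj
      apply Real.exp_le_exp.mpr
      rw [dotR_sub_smul]
      have : lam * dotR (f j) (emb z') ≤ 0 := mul_nonpos_of_nonneg_of_nonpos hlam0.le hj
      linarith
    fin_cases i
    · exact Or.inl (hle 0 hi)
    · exact Or.inr (hle 1 hi)
  have hsplit := exitLExp_split (twKer γ 0) (emb ⁻¹' K) z
    (fun z' => Real.exp (dotR b (emb z')))
    (fun z' => Real.exp (dotR (b - lam • f 0) (emb z')))
    (fun z' => Real.exp (dotR (b - lam • f 1) (emb z'))) key
  have h0 := exitLExp_le hγ0 hA3 (hble 0) (emb ⁻¹' K) z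
  have h1 := exitLExp_le hγ0 hA3 (hble 1) (emb ⁻¹' K) z
  have hfin : exitLExp (twKer γ 0) (emb ⁻¹' K) z (fun z' => Real.exp (dotR b (emb z')))
      ≤ ENNReal.ofReal (Real.exp (dotR (b - lam • f 0) (emb z)))
        + ENNReal.ofReal (Real.exp (dotR (b - lam • f 1) (emb z))) :=
    hsplit.trans (add_le_add h0 h1)
  exact ne_top_of_le_ne_top
    (ENNReal.add_ne_top.mpr ⟨ENNReal.ofReal_ne_top, ENNReal.ofReal_ne_top⟩) hfin
end KilledRW
end
end

section
/- For i = 1,2 and a = a(c_i): ℙ_z(τ_a < ∞) = 1 for every z ∈ K; equivalently 𝔼_z[e^{a·(S(τ)−z)}; τ < ∞] = 1. -/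
open scoped ENNReal Classical

noncomputable section

namespace KilledRW

-- General kernel lemmas
section Gen
variable (κ : Z2 → Z2 → ℝ≥0∞) (A : Set Z2)

lemma aliveP_zero (z w : Z2) : aliveP κ A 0 z w = if w = z ∧ z ∈ A then 1 else 0 := rfl

lemma aliveP_succ (n : ℕ) (z w : Z2) :
    aliveP κ A (n+1) z w = if z ∈ A then ∑' v : Z2, κ z v * aliveP κ A n v w else 0 := rfl

lemma exitP_zero (z w : Z2) : exitP κ A 0 z w = if w = z ∧ z ∉ A then 1 else 0 := rfl

lemma exitP_succ (n : ℕ) (z w : Z2) :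
    exitP κ A (n+1) z w = if z ∈ A then ∑' v : Z2, κ z v * exitP κ A n v w else 0 := rfl

lemma aliveP_eq_zero_of_notMem (n : ℕ) (z w : Z2) (hw : w ∉ A) : aliveP κ A n z w = 0 := by
  induction n generalizing z with
  | zero => rw [aliveP_zero, if_neg]; rintro ⟨rfl, h⟩; exact hw h
  | succ n ih =>
    rw [aliveP_succ]
    split
    · simp only [ih, mul_zero, tsum_zero]
    · rfl

lemma aliveP_start_notMem (n : ℕ) (z w : Z2) (hz : z ∉ A) : aliveP κ A n z w = 0 := by
  cases n with
  | zero => rw [aliveP_zero, if_neg]; rintro ⟨rfl, h⟩; exact hz h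
  | succ n => rw [aliveP_succ, if_neg hz]

lemma aliveP_chapman (n k : ℕ) (z w : Z2) :
    aliveP κ A (n + k) z w = ∑' v : Z2, aliveP κ A n z v * aliveP κ A k v w := by
  induction n generalizing z with
  | zero =>
    simp only [Nat.zero_add, aliveP_zero]
    rw [tsum_eq_single z]
    · by_cases hz : z ∈ A
      · simp [hz]
      · simp [hz, aliveP_start_notMem κ A k z w hz]
    · intro v hv
      rw [if_neg, zero_mul]
      exact fun h => hv h.1
  | succ n ih =>
    have h1 : n + 1 + k = (n + k) + 1 := by ring
    rw [h1]
    simp only [aliveP_succ]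
    by_cases hz : z ∈ A
    · simp only [if_pos hz, ih]
      calc ∑' v', κ z v' * ∑' v, aliveP κ A n v' v * aliveP κ A k v w
          = ∑' v', ∑' v, κ z v' * (aliveP κ A n v' v * aliveP κ A k v w) := by
            exact tsum_congr fun v' => ENNReal.tsum_mul_left.symm
        _ = ∑' v, ∑' v', κ z v' * (aliveP κ A n v' v * aliveP κ A k v w) := ENNReal.tsum_comm
        _ = ∑' v, (∑' v', κ z v' * aliveP κ A n v' v) * aliveP κ A k v w := by
            refine tsum_congr fun v => ?_
            rw [← ENNReal.tsum_mul_right]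
            exact tsum_congr fun v' => by ring
    · simp [hz]

lemma aliveP_one (v w : Z2) :
    aliveP κ A 1 v w = (if v ∈ A then 1 else 0) * κ v w * (if w ∈ A then 1 else 0) := by
  rw [aliveP_succ]
  by_cases hv : v ∈ A
  · rw [if_pos hv, tsum_eq_single w]
    · by_cases hw : w ∈ A <;> simp [aliveP_zero, hv, hw]
    · intro v' hv'
      rw [aliveP_zero, if_neg, mul_zero]
      exact fun h => hv' h.1.symm
  · simp [hv]

lemma aliveP_mono_set (A' : Set Z2) (hAA : A ⊆ A') (n : ℕ) (z w : Z2) :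
    aliveP κ A n z w ≤ aliveP κ A' n z w := by
  induction n generalizing z with
  | zero =>
    rw [aliveP_zero, aliveP_zero]
    split
    · rw [if_pos ⟨‹_ ∧ _›.1, hAA ‹_ ∧ _›.2⟩]
    · exact zero_le
  | succ n ih =>
    rw [aliveP_succ, aliveP_succ]
    split
    · rw [if_pos (hAA ‹_›)]
      exact ENNReal.tsum_le_tsum fun v => mul_le_mul_right (ih v) _
    · exact zero_le

/-- total alive mass is at most 1 for a substochastic kernel -/
lemma aliveSum_le_one (hκ : ∀ z, ∑' w, κ z w ≤ 1) (n : ℕ) (z : Z2) :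
    ∑' w, aliveP κ A n z w ≤ 1 := by
  induction n generalizing z with
  | zero =>
    rw [tsum_eq_single z]
    · rw [aliveP_zero]; split <;> simp
    · intro v hv
      rw [aliveP_zero, if_neg]
      exact fun h => hv h.1
  | succ n ih =>
    simp only [aliveP_succ]
    split
    · rw [ENNReal.tsum_comm]
      calc ∑' v, ∑' w, κ z v * aliveP κ A n v w
          = ∑' v, κ z v * ∑' w, aliveP κ A n v w := by
            exact tsum_congr fun v => ENNReal.tsum_mul_left
        _ ≤ ∑' v, κ z v * 1 := ENNReal.tsum_le_tsum fun v => mul_le_mul_right (ih v) _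
        _ ≤ 1 := by simpa using hκ z
    · simp

lemma aliveP_mem (n : ℕ) (z w : Z2) (h : aliveP κ A n z w ≠ 0) : w ∈ A := by
  by_contra hw
  exact h (aliveP_eq_zero_of_notMem κ A n z w hw)

/-- last-step decomposition of the alive mass -/
lemma aliveSum_succ (n : ℕ) (z : Z2) :
    ∑' w, aliveP κ A (n+1) z w
      = ∑' v, aliveP κ A n z v * ∑' w, (κ v w * (if w ∈ A then 1 else 0)) := by
  have h : ∀ w, aliveP κ A (n+1) z w = ∑' v, aliveP κ A n z v * aliveP κ A 1 v w :=
    fun w => aliveP_chapman κ A n 1 z w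
  simp only [h]
  rw [ENNReal.tsum_comm]
  refine tsum_congr fun v => ?_
  rw [ENNReal.tsum_mul_left]
  by_cases hv : v ∈ A
  · refine congrArg _ (tsum_congr fun w => ?_)
    rw [aliveP_one]
    simp [hv]
  · rw [aliveP_eq_zero_of_notMem κ A n z v hv, zero_mul, zero_mul]

/-- first-step decomposition of the alive mass, from an alive start -/
lemma aliveSum_first (n : ℕ) (v : Z2) (hv : v ∈ A) :
    ∑' w, aliveP κ A (n+1) v w = ∑' v', κ v v' * ∑' w, aliveP κ A n v' w := by
  simp only [aliveP_succ, if_pos hv]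
  rw [ENNReal.tsum_comm]
  exact tsum_congr fun v' => ENNReal.tsum_mul_left

end Gen

section ExitId
variable (κ : Z2 → Z2 → ℝ≥0∞) (A : Set Z2)

lemma exitSum_zero (z : Z2) : ∑' w, exitP κ A 0 z w = if z ∉ A then 1 else 0 := by
  rw [tsum_eq_single z]
  · rw [exitP_zero]; split <;> simp_all
  · intro v hv
    rw [exitP_zero, if_neg]
    exact fun h => hv h.1

lemma exitSum_first (m : ℕ) (z : Z2) (hz : z ∈ A) :
    ∑' w, exitP κ A (m+1) z w = ∑' v, κ z v * ∑' w, exitP κ A m v w := by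
  simp only [exitP_succ, if_pos hz]
  rw [ENNReal.tsum_comm]
  exact tsum_congr fun v => ENNReal.tsum_mul_left

lemma exit_alive_identity (hκ : ∀ z, ∑' w : Z2, κ z w = 1) (n : ℕ) (z : Z2) :
    (∑ m ∈ Finset.range (n+1), ∑' w, exitP κ A m z w) + ∑' w, aliveP κ A n z w = 1 := by
  induction n generalizing z with
  | zero =>
    rw [Finset.sum_range_one, exitSum_zero]
    rw [tsum_eq_single z (fun v hv => by rw [aliveP_zero, if_neg]; exact fun h => hv h.1)]
    rw [aliveP_zero]
    by_cases hz : z ∈ A <;> simp [hz]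
  | succ n ih =>
    by_cases hz : z ∈ A
    · rw [Finset.sum_range_succ']
      rw [exitSum_zero]
      simp only [hz, not_true_eq_false, if_false, add_zero]
      have h1 : ∀ m ∈ Finset.range (n+1), ∑' w, exitP κ A (m+1) z w
          = ∑' v, κ z v * ∑' w, exitP κ A m v w := fun m _ => exitSum_first κ A m z hz
      rw [Finset.sum_congr rfl h1, aliveSum_first κ A n z hz]
      rw [← Summable.tsum_finsetSum (fun m _ => ENNReal.summable)]
      rw [← ENNReal.tsum_add]
      calc ∑' v, ((∑ m ∈ Finset.range (n+1), κ z v * ∑' w, exitP κ A m v w)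
              + κ z v * ∑' w, aliveP κ A n v w)
          = ∑' v, κ z v * ((∑ m ∈ Finset.range (n+1), ∑' w, exitP κ A m v w)
              + ∑' w, aliveP κ A n v w) := by
            refine tsum_congr fun v => ?_
            rw [mul_add, Finset.mul_sum]
        _ = ∑' v, κ z v := by
            refine tsum_congr fun v => ?_
            rw [ih v, mul_one]
        _ = 1 := hκ z
    · have hA : ∑' w, aliveP κ A (n+1) z w = 0 := by
        simp [aliveP_start_notMem κ A _ _ _ hz]
      rw [hA, add_zero, Finset.sum_range_succ']
      rw [exitSum_zero, if_pos hz]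
      have h2 : ∀ m ∈ Finset.range (n+1), ∑' w, exitP κ A (m+1) z w = 0 := by
        intro m _
        simp [exitP_succ, hz]
      rw [Finset.sum_congr rfl h2]
      simp
end ExitId

section ExitTot
variable (κ : Z2 → Z2 → ℝ≥0∞) (A : Set Z2)

lemma exitTotal_eq_one_of_alive_zero (hκ : ∀ z, ∑' w : Z2, κ z w = 1) (z : Z2)
    (halive : ⨅ n, ∑' w, aliveP κ A n z w = 0) : exitTotal κ A z = 1 := by
  have hfin : ∀ n, ∑' w, aliveP κ A n z w ≤ 1 :=
    fun n => aliveSum_le_one κ A (fun v => le_of_eq (hκ v)) n z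
  have hpart : ∀ n, ∑ m ∈ Finset.range (n+1), ∑' w, exitP κ A m z w
      = 1 - ∑' w, aliveP κ A n z w := by
    intro n
    have := exit_alive_identity κ A hκ n z
    exact ENNReal.eq_sub_of_add_eq (lt_of_le_of_lt (hfin n) ENNReal.one_lt_top).ne this
  rw [exitTotal, ENNReal.tsum_eq_iSup_nat]
  apply le_antisymm
  · refine iSup_le fun N => ?_
    cases N with
    | zero => simp
    | succ n => rw [hpart n]; exact tsub_le_self
  · calc (1:ℝ≥0∞) = 1 - ⨅ n, ∑' w, aliveP κ A n z w := by rw [halive, tsub_zero]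
      _ = ⨆ n, (1 - ∑' w, aliveP κ A n z w) := ENNReal.sub_iInf
      _ ≤ ⨆ N, ∑ m ∈ Finset.range N, ∑' w, exitP κ A m z w := by
          refine iSup_le fun n => ?_
          rw [← hpart n]
          exact le_iSup (fun N => ∑ m ∈ Finset.range N, ∑' w, exitP κ A m z w) (n+1)
end ExitTot

section Half
variable (νR : Z2 → ℝ) (t : Z2 → ℝ)

/-- kernel of a translation-invariant walk with step distribution `νR`. -/
def hker : Z2 → Z2 → ℝ≥0∞ := fun z w => ENNReal.ofReal (νR (w - z))

/-- the half-plane `{w | 0 < t w}`. -/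
def hset : Set Z2 := {w | 0 < t w}

lemma mem_hset {w : Z2} : w ∈ hset t ↔ 0 < t w := Iff.rfl

lemma hker_tsum (z : Z2) (F : Z2 → ℝ≥0∞) :
    ∑' w, hker νR z w * F w = ∑' ξ, ENNReal.ofReal (νR ξ) * F (z + ξ) := by
  refine ((Equiv.addLeft z).tsum_eq (fun w => hker νR z w * F w)).symm.trans ?_
  refine tsum_congr fun ξ => ?_
  simp [hker, add_sub_cancel_left]

lemma hker_sum_one (hν0 : ∀ ξ, 0 ≤ νR ξ) (hνs : Summable νR) (hν1 : ∑' ξ, νR ξ = 1)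
    (z : Z2) : ∑' w, hker νR z w = 1 := by
  calc ∑' w, hker νR z w = ∑' ξ, ENNReal.ofReal (νR ξ) := by
        simpa using hker_tsum νR z (fun _ => 1)
    _ = ENNReal.ofReal (∑' ξ, νR ξ) := (ENNReal.ofReal_tsum_of_nonneg hν0 hνs).symm
    _ = 1 := by rw [hν1, ENNReal.ofReal_one]

lemma t_sub (htadd : ∀ v w, t (v + w) = t v + t w) (v w : Z2) : t (w - v) = t w - t v := by
  have := htadd (w - v) v
  simp only [sub_add_cancel] at this
  linarith

variable {νR t} (hν0 : ∀ ξ, 0 ≤ νR ξ) (hνs : Summable νR) (hν1 : ∑' ξ, νR ξ = 1)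
  (htadd : ∀ v w, t (v + w) = t v + t w)
  {ξ₀ : Z2} (hξ₀ : 0 < νR ξ₀) (ht₀ : t ξ₀ < 0)

include hν0 hνs hν1 htadd hξ₀ ht₀ in
/-- strip-killing: starting within distance `k·ε` of the boundary, the walk survives `k`
steps with probability at most `1 - νR ξ₀ ^ k`. -/
lemma strip_kill : ∀ (k : ℕ) (v : Z2), t v ≤ (k : ℝ) * (-t ξ₀) →
    (∑' w, aliveP (hker νR) (hset t) k v w) + ENNReal.ofReal (νR ξ₀ ^ k) ≤ 1 := by
  intro k
  induction k with
  | zero =>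
    intro v hv
    have hvB : v ∉ hset t := by
      rw [mem_hset]; push_neg; simpa using hv
    have : ∑' w, aliveP (hker νR) (hset t) 0 v w = 0 := by
      simp [aliveP_start_notMem _ _ _ _ _ hvB]
    rw [this, zero_add, pow_zero, ENNReal.ofReal_one]
  | succ k ih =>
    intro v hv
    have hp1 : νR ξ₀ ≤ 1 := by
      rw [← hν1]; exact hνs.le_tsum ξ₀ (fun _ _ => hν0 _)
    by_cases hvB : v ∈ hset t
    · rw [aliveSum_first _ _ k v hvB]
      have hk : hker νR v (v + ξ₀) = ENNReal.ofReal (νR ξ₀) := by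
        simp [hker, add_sub_cancel_left]
      have hIH : ∑' w', aliveP (hker νR) (hset t) k (v + ξ₀) w' + ENNReal.ofReal (νR ξ₀ ^ k) ≤ 1 := by
        refine ih (v + ξ₀) ?_
        rw [htadd]
        push_cast at hv ⊢
        linarith
      have hpow : ENNReal.ofReal (νR ξ₀ ^ (k+1))
          = ENNReal.ofReal (νR ξ₀) * ENNReal.ofReal (νR ξ₀ ^ k) := by
        rw [pow_succ, mul_comm (νR ξ₀ ^ k), ENNReal.ofReal_mul (hν0 ξ₀)]
      obtain ⟨R, Rk, hR1, hR2, hR3⟩ : ∃ R Rk,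
          (∑' w, hker νR v w * ∑' w', aliveP (hker νR) (hset t) k w w')
            = ENNReal.ofReal (νR ξ₀) * (∑' w', aliveP (hker νR) (hset t) k (v + ξ₀) w') + R
          ∧ R ≤ Rk ∧ ENNReal.ofReal (νR ξ₀) + Rk = 1 := by
        refine ⟨∑' w, if w = v + ξ₀ then 0 else
            hker νR v w * ∑' w', aliveP (hker νR) (hset t) k w w',
          ∑' w, if w = v + ξ₀ then 0 else hker νR v w, ?_, ?_, ?_⟩
        · rw [← hk]; exact ENNReal.summable.tsum_eq_add_tsum_ite' (v + ξ₀)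
        · refine ENNReal.tsum_le_tsum fun w => ?_
          split
          · exact le_rfl
          · exact mul_le_of_le_one_right (zero_le)
              (aliveSum_le_one _ _ (fun u => (hker_sum_one νR hν0 hνs hν1 u).le) k w)
        · rw [← hk, ← ENNReal.summable.tsum_eq_add_tsum_ite' (v + ξ₀)]
          exact hker_sum_one νR hν0 hνs hν1 v
      rw [hR1, hpow]
      calc ENNReal.ofReal (νR ξ₀) * (∑' w', aliveP (hker νR) (hset t) k (v + ξ₀) w') + R
            + ENNReal.ofReal (νR ξ₀) * ENNReal.ofReal (νR ξ₀ ^ k)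
          = ENNReal.ofReal (νR ξ₀) * ((∑' w', aliveP (hker νR) (hset t) k (v + ξ₀) w')
              + ENNReal.ofReal (νR ξ₀ ^ k)) + R := by ring
        _ ≤ ENNReal.ofReal (νR ξ₀) * 1 + Rk := add_le_add (mul_le_mul_right hIH _) hR2
        _ = 1 := by rw [mul_one, hR3]
    · have : ∑' w, aliveP (hker νR) (hset t) (k+1) v w = 0 := by
        simp [aliveP_start_notMem _ _ _ _ _ hvB]
      rw [this, zero_add, ← ENNReal.ofReal_one]
      exact ENNReal.ofReal_le_ofReal (pow_le_one₀ (hν0 ξ₀) hp1)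

include hν0 hνs hν1 htadd hξ₀ ht₀ in
lemma step_down (z : Z2) (n k : ℕ) :
    (∑' w, aliveP (hker νR) (hset t) (n+k) z w)
      + ENNReal.ofReal (νR ξ₀ ^ k) *
        (∑' v, if t v ≤ (k:ℝ) * (-t ξ₀) then aliveP (hker νR) (hset t) n z v else 0)
      ≤ ∑' w, aliveP (hker νR) (hset t) n z w := by
  have hch : ∑' w, aliveP (hker νR) (hset t) (n+k) z w
      = ∑' v, aliveP (hker νR) (hset t) n z v * ∑' w, aliveP (hker νR) (hset t) k v w := by
    simp only [aliveP_chapman (hker νR) (hset t) n k z]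
    rw [ENNReal.tsum_comm]
    exact tsum_congr fun v => ENNReal.tsum_mul_left
  rw [hch, ← ENNReal.tsum_mul_left, ← ENNReal.tsum_add]
  refine ENNReal.tsum_le_tsum fun v => ?_
  by_cases hv : t v ≤ (k:ℝ) * (-t ξ₀)
  · rw [if_pos hv]
    calc aliveP (hker νR) (hset t) n z v * ∑' w, aliveP (hker νR) (hset t) k v w
          + ENNReal.ofReal (νR ξ₀ ^ k) * aliveP (hker νR) (hset t) n z v
        = aliveP (hker νR) (hset t) n z v *
            ((∑' w, aliveP (hker νR) (hset t) k v w) + ENNReal.ofReal (νR ξ₀ ^ k)) := by ring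
      _ ≤ aliveP (hker νR) (hset t) n z v * 1 :=
          mul_le_mul_right (strip_kill hν0 hνs hν1 htadd hξ₀ ht₀ k v hv) _
      _ = aliveP (hker νR) (hset t) n z v := mul_one _
  · rw [if_neg hv, mul_zero, add_zero]
    exact mul_le_of_le_one_right (zero_le)
      (aliveSum_le_one _ _ (fun u => (hker_sum_one νR hν0 hνs hν1 u).le) k v)

include hν0 hνs hν1 htadd hξ₀ ht₀ in
lemma strip_time (z : Z2) (k : ℕ) :
    ∑' n, (∑' v, if t v ≤ (k:ℝ) * (-t ξ₀) then aliveP (hker νR) (hset t) n z v else 0)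
      ≤ (k : ℝ≥0∞) / ENNReal.ofReal (νR ξ₀ ^ k) := by
  set u : ℕ → ℝ≥0∞ := fun n => ∑' w, aliveP (hker νR) (hset t) n z w with hu
  set b : ℕ → ℝ≥0∞ := fun n =>
    ∑' v, if t v ≤ (k:ℝ) * (-t ξ₀) then aliveP (hker νR) (hset t) n z v else 0 with hb
  have hu1 : ∀ n, u n ≤ 1 :=
    fun n => aliveSum_le_one _ _ (fun w => (hker_sum_one νR hν0 hνs hν1 w).le) n z
  have hd0 : ENNReal.ofReal (νR ξ₀ ^ k) ≠ 0 := by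
    simp [ENNReal.ofReal_eq_zero, not_le, pow_pos hξ₀]
  have hpart : ∀ N, ENNReal.ofReal (νR ξ₀ ^ k) * ∑ n ∈ Finset.range N, b n ≤ (k : ℝ≥0∞) := by
    intro N
    have h1 : ∑ n ∈ Finset.range N, (u (n+k) + ENNReal.ofReal (νR ξ₀ ^ k) * b n)
        ≤ ∑ n ∈ Finset.range N, u n :=
      Finset.sum_le_sum fun n _ => step_down hν0 hνs hν1 htadd hξ₀ ht₀ z n k
    rw [Finset.sum_add_distrib, ← Finset.mul_sum] at h1
    have h2 : ∑ n ∈ Finset.range N, u n ≤ ∑ n ∈ Finset.range (k + N), u n :=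
      Finset.sum_le_sum_of_subset (Finset.range_subset_range.2 (Nat.le_add_left N k))
    rw [Finset.sum_range_add] at h2
    have h3 : ∑ n ∈ Finset.range N, u (k + n) = ∑ n ∈ Finset.range N, u (n + k) := by
      refine Finset.sum_congr rfl fun n _ => by rw [Nat.add_comm]
    rw [h3] at h2
    have h4 : ENNReal.ofReal (νR ξ₀ ^ k) * ∑ n ∈ Finset.range N, b n
        + ∑ n ∈ Finset.range N, u (n + k)
        ≤ (∑ n ∈ Finset.range k, u n) + ∑ n ∈ Finset.range N, u (n + k) := by
      calc _ = ∑ n ∈ Finset.range N, u (n+k) + ENNReal.ofReal (νR ξ₀ ^ k) * ∑ n ∈ Finset.range N, b n := by ring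
        _ ≤ ∑ n ∈ Finset.range N, u n := h1
        _ ≤ _ := h2
    have hfin : (∑ n ∈ Finset.range N, u (n + k)) ≠ ∞ := by
      refine (lt_of_le_of_lt (Finset.sum_le_sum fun n _ => hu1 (n+k)) ?_).ne
      simp only [Finset.sum_const, Finset.card_range, nsmul_eq_mul, mul_one]
      exact ENNReal.natCast_lt_top N
    have h5 : ENNReal.ofReal (νR ξ₀ ^ k) * ∑ n ∈ Finset.range N, b n
        ≤ ∑ n ∈ Finset.range k, u n := ENNReal.le_of_add_le_add_right hfin h4
    calc ENNReal.ofReal (νR ξ₀ ^ k) * ∑ n ∈ Finset.range N, b n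
        ≤ ∑ n ∈ Finset.range k, u n := h5
      _ ≤ ∑ _n ∈ Finset.range k, 1 := Finset.sum_le_sum fun n _ => hu1 n
      _ = (k : ℝ≥0∞) := by simp
  rw [ENNReal.tsum_eq_iSup_nat]
  refine iSup_le fun N => ?_
  rw [ENNReal.le_div_iff_mul_le (Or.inl hd0) (Or.inl ENNReal.ofReal_ne_top)]
  rw [mul_comm]
  exact hpart N

/-- weighted last-step decomposition -/
lemma aliveSum_succ_weight (κ : Z2 → Z2 → ℝ≥0∞) (A : Set Z2) (n : ℕ) (z : Z2) (G : Z2 → ℝ≥0∞) :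
    ∑' w, aliveP κ A (n+1) z w * G w
      = ∑' v, aliveP κ A n z v * ∑' w, (κ v w * (if w ∈ A then 1 else 0) * G w) := by
  have h : ∀ w, aliveP κ A (n+1) z w = ∑' v, aliveP κ A n z v * aliveP κ A 1 v w :=
    fun w => aliveP_chapman κ A n 1 z w
  simp only [h, ← ENNReal.tsum_mul_right]
  rw [ENNReal.tsum_comm]
  refine tsum_congr fun v => ?_
  simp only [mul_assoc]
  rw [ENNReal.tsum_mul_left]
  by_cases hv : v ∈ A
  · refine congrArg _ (tsum_congr fun w => ?_)
    rw [aliveP_one]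
    simp [hv]
  · rw [aliveP_eq_zero_of_notMem κ A n z v hv, zero_mul, zero_mul]

/-- the expected overshoot-type error term for one step from `v`. -/
def dstep (ν' t' : Z2 → ℝ) (l : ℝ) (v : Z2) : ℝ≥0∞ :=
  ∑' ξ, if t' v + t' ξ ≤ 0 then
    ENNReal.ofReal (ν' ξ) * ENNReal.ofReal (Real.exp (l * (-t' ξ)) - 1) else 0

variable (hmom : ∀ c : ℝ, Summable fun ξ => νR ξ * Real.exp (c * t ξ))
  (hmeans : Summable fun ξ => νR ξ * t ξ) (hmean : ∑' ξ, νR ξ * t ξ = 0)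

include hν0 hνs hν1 hmom hmeans hmean in
lemma psi_ge_one (l : ℝ) :
    (1:ℝ≥0∞) ≤ ∑' ξ, ENNReal.ofReal (νR ξ) * ENNReal.ofReal (Real.exp (l * t ξ)) := by
  have hsum : Summable (fun ξ => νR ξ * Real.exp (l * t ξ)) := hmom l
  have h1 : (1:ℝ) ≤ ∑' ξ, νR ξ * Real.exp (l * t ξ) := by
    have hle : ∀ ξ, νR ξ + l * (νR ξ * t ξ) ≤ νR ξ * Real.exp (l * t ξ) := by
      intro ξ
      have h := Real.add_one_le_exp (l * t ξ)
      nlinarith [hν0 ξ]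
    have hsum2 : Summable (fun ξ => νR ξ + l * (νR ξ * t ξ)) := hνs.add (hmeans.mul_left l)
    have h2 := hsum2.tsum_le_tsum hle hsum
    rw [hνs.tsum_add (hmeans.mul_left l), tsum_mul_left, hmean, hν1] at h2
    simpa using h2
  calc (1:ℝ≥0∞) = ENNReal.ofReal 1 := ENNReal.ofReal_one.symm
    _ ≤ ENNReal.ofReal (∑' ξ, νR ξ * Real.exp (l * t ξ)) := ENNReal.ofReal_le_ofReal h1
    _ = ∑' ξ, ENNReal.ofReal (νR ξ * Real.exp (l * t ξ)) :=
        ENNReal.ofReal_tsum_of_nonneg (fun ξ => mul_nonneg (hν0 ξ) (Real.exp_pos _).le) hsum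
    _ = ∑' ξ, ENNReal.ofReal (νR ξ) * ENNReal.ofReal (Real.exp (l * t ξ)) :=
        tsum_congr fun ξ => ENNReal.ofReal_mul (hν0 ξ)

include hν0 hνs hν1 htadd hmom hmeans hmean in
lemma star_ineq (l : ℝ) (hl0 : 0 < l) (v : Z2) (hv : 0 < t v) :
    ENNReal.ofReal (Real.exp (-l * t v))
      + (∑' w, hker νR v w * (if w ∈ hset t then 1 else 0))
    ≤ (∑' w, hker νR v w * (if w ∈ hset t then 1 else 0)
          * ENNReal.ofReal (Real.exp (-l * t w)))
      + 1 + dstep νR t l v := by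
  set χ : Z2 → ℝ≥0∞ := fun w => if w ∈ hset t then 1 else 0 with hχ
  set χ' : Z2 → ℝ≥0∞ := fun w => if w ∈ hset t then 0 else 1 with hχ'
  set E : Z2 → ℝ≥0∞ := fun w => ENNReal.ofReal (Real.exp (-l * t w)) with hE
  have hstep1 : E v ≤ ∑' w, hker νR v w * E w := by
    rw [hker_tsum]
    have hfac : ∀ ξ : Z2, E (v + ξ)
        = E v * ENNReal.ofReal (Real.exp (-l * t ξ)) := by
      intro ξ
      rw [hE]
      simp only
      rw [htadd, ← ENNReal.ofReal_mul (Real.exp_pos _).le, ← Real.exp_add]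
      ring_nf
    calc E v = E v * 1 := (mul_one _).symm
      _ ≤ E v * ∑' ξ, ENNReal.ofReal (νR ξ) * ENNReal.ofReal (Real.exp (-l * t ξ)) :=
          mul_le_mul_right (psi_ge_one hν0 hνs hν1 hmom hmeans hmean (-l)) _
      _ = ∑' ξ, ENNReal.ofReal (νR ξ) * E (v + ξ) := by
          rw [← ENNReal.tsum_mul_left]
          refine tsum_congr fun ξ => ?_
          rw [hfac ξ]; ring
  have hsplit : ∑' w, hker νR v w * E w
      = (∑' w, hker νR v w * χ w * E w) + ∑' w, hker νR v w * χ' w * E w := by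
    rw [← ENNReal.tsum_add]
    refine tsum_congr fun w => ?_
    by_cases hw : w ∈ hset t <;> simp [hχ, hχ', hw]
  have hD : ∑' w, (if t v + t (w - v) ≤ 0 then
      ENNReal.ofReal (νR (w - v)) * ENNReal.ofReal (Real.exp (l * (-t (w - v))) - 1) else 0)
      = dstep νR t l v := by
    simp only [dstep]
    rw [← (Equiv.addLeft v).tsum_eq (fun w => if t v + t (w - v) ≤ 0 then
      ENNReal.ofReal (νR (w - v)) * ENNReal.ofReal (Real.exp (l * (-t (w - v))) - 1) else 0)]
    refine tsum_congr fun ξ => ?_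
    simp [add_sub_cancel_left]
  have hbound : ∑' w, hker νR v w * χ' w * E w
      ≤ (∑' w, hker νR v w * χ' w) + dstep νR t l v := by
    rw [← hD, ← ENNReal.tsum_add]
    refine ENNReal.tsum_le_tsum fun w => ?_
    by_cases hw : w ∈ hset t
    · simp [hχ', hw]
    · have htw : t w ≤ 0 := by
        rw [mem_hset] at hw; linarith [not_lt.mp hw]
      have htwv : t (w - v) = t w - t v := t_sub t htadd v w
      have hcond : t v + t (w - v) ≤ 0 := by rw [htwv]; linarith
      have hexp1 : (1:ℝ) ≤ Real.exp (l * (-t (w - v))) := by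
        rw [← Real.exp_zero]
        apply Real.exp_le_exp.2
        rw [htwv]
        nlinarith
      have hreal : Real.exp (-l * t w) ≤ Real.exp (l * (-t (w - v))) := by
        apply Real.exp_le_exp.2
        rw [htwv]
        nlinarith
      simp only [hχ', hw, if_neg, if_false, mul_one, if_pos hcond]
      calc hker νR v w * E w
          ≤ hker νR v w * ENNReal.ofReal (Real.exp (l * (-t (w - v)))) :=
            mul_le_mul_right (ENNReal.ofReal_le_ofReal hreal) _
        _ = hker νR v w * (1 + ENNReal.ofReal (Real.exp (l * (-t (w - v))) - 1)) := by
            rw [← ENNReal.ofReal_one, ← ENNReal.ofReal_add zero_le_one (by linarith)]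
            ring_nf
        _ = hker νR v w + hker νR v w * ENNReal.ofReal (Real.exp (l * (-t (w - v))) - 1) := by
            ring
        _ = hker νR v w + ENNReal.ofReal (νR (w - v))
              * ENNReal.ofReal (Real.exp (l * (-t (w - v))) - 1) := by rw [hker]
  have hχtot : (∑' w, hker νR v w * χ w) + (∑' w, hker νR v w * χ' w) = 1 := by
    rw [← ENNReal.tsum_add, ← hker_sum_one νR hν0 hνs hν1 v]
    refine tsum_congr fun w => ?_
    by_cases hw : w ∈ hset t <;> simp [hχ, hχ', hw]
  calc E v + ∑' w, hker νR v w * χ w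
      ≤ (∑' w, hker νR v w * E w) + ∑' w, hker νR v w * χ w :=
        add_le_add_left hstep1 _
    _ = (∑' w, hker νR v w * χ w * E w) + ((∑' w, hker νR v w * χ' w * E w)
          + ∑' w, hker νR v w * χ w) := by rw [hsplit]; ring
    _ ≤ (∑' w, hker νR v w * χ w * E w) + (((∑' w, hker νR v w * χ' w) + dstep νR t l v)
          + ∑' w, hker νR v w * χ w) := by
        exact add_le_add_right (add_le_add_left hbound _) _
    _ = (∑' w, hker νR v w * χ w * E w) + 1 + dstep νR t l v := by
        rw [← hχtot]; ring

include hν0 hνs hν1 htadd hmom hmeans hmean in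
lemma super_step (l : ℝ) (hl0 : 0 < l) (z : Z2) (n : ℕ) :
    (∑' w, aliveP (hker νR) (hset t) n z w * ENNReal.ofReal (Real.exp (-l * t w)))
      + ∑' w, aliveP (hker νR) (hset t) (n+1) z w
    ≤ (∑' w, aliveP (hker νR) (hset t) (n+1) z w * ENNReal.ofReal (Real.exp (-l * t w)))
      + (∑' w, aliveP (hker νR) (hset t) n z w)
      + ∑' v, aliveP (hker νR) (hset t) n z v * dstep νR t l v := by
  have hW1 : ∑' w, aliveP (hker νR) (hset t) (n+1) z w * ENNReal.ofReal (Real.exp (-l * t w))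
      = ∑' v, aliveP (hker νR) (hset t) n z v * ∑' w, (hker νR v w
          * (if w ∈ hset t then 1 else 0) * ENNReal.ofReal (Real.exp (-l * t w))) :=
    aliveSum_succ_weight _ _ n z _
  have hu1 : ∑' w, aliveP (hker νR) (hset t) (n+1) z w
      = ∑' v, aliveP (hker νR) (hset t) n z v
          * ∑' w, (hker νR v w * (if w ∈ hset t then 1 else 0)) := by
    have h := aliveSum_succ_weight (hker νR) (hset t) n z (fun _ => 1)
    simpa using h
  rw [hW1, hu1, ← ENNReal.tsum_add, ← ENNReal.tsum_add, ← ENNReal.tsum_add]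
  refine ENNReal.tsum_le_tsum fun v => ?_
  by_cases hal : aliveP (hker νR) (hset t) n z v = 0
  · simp [hal]
  · have hvB : v ∈ hset t := aliveP_mem _ _ n z v hal
    rw [mem_hset] at hvB
    calc aliveP (hker νR) (hset t) n z v * ENNReal.ofReal (Real.exp (-l * t v))
          + aliveP (hker νR) (hset t) n z v
            * ∑' w, (hker νR v w * (if w ∈ hset t then 1 else 0))
        = aliveP (hker νR) (hset t) n z v * (ENNReal.ofReal (Real.exp (-l * t v))
            + ∑' w, (hker νR v w * (if w ∈ hset t then 1 else 0))) := by ring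
      _ ≤ aliveP (hker νR) (hset t) n z v * ((∑' w, hker νR v w * (if w ∈ hset t then 1 else 0)
            * ENNReal.ofReal (Real.exp (-l * t w))) + 1 + dstep νR t l v) :=
          mul_le_mul_right (star_ineq hν0 hνs hν1 htadd hmom hmeans hmean l hl0 v hvB) _
      _ = aliveP (hker νR) (hset t) n z v * (∑' w, hker νR v w * (if w ∈ hset t then 1 else 0)
            * ENNReal.ofReal (Real.exp (-l * t w)))
          + aliveP (hker νR) (hset t) n z v * 1
          + aliveP (hker νR) (hset t) n z v * dstep νR t l v := by ring
      _ = _ := by rw [mul_one]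

include hν0 hνs hν1 htadd hmom hmeans hmean in
lemma super_tele (l : ℝ) (hl0 : 0 < l) (z : Z2) (N : ℕ) :
    (∑' w, aliveP (hker νR) (hset t) 0 z w * ENNReal.ofReal (Real.exp (-l * t w)))
      + ∑' w, aliveP (hker νR) (hset t) N z w
    ≤ (∑' w, aliveP (hker νR) (hset t) N z w * ENNReal.ofReal (Real.exp (-l * t w)))
      + (∑' w, aliveP (hker νR) (hset t) 0 z w)
      + ∑ n ∈ Finset.range N, ∑' v, aliveP (hker νR) (hset t) n z v * dstep νR t l v := by
  set W : ℕ → ℝ≥0∞ := fun n =>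
    ∑' w, aliveP (hker νR) (hset t) n z w * ENNReal.ofReal (Real.exp (-l * t w)) with hW
  set u : ℕ → ℝ≥0∞ := fun n => ∑' w, aliveP (hker νR) (hset t) n z w with hu
  set D : ℕ → ℝ≥0∞ := fun n => ∑' v, aliveP (hker νR) (hset t) n z v * dstep νR t l v with hD
  have hu1 : ∀ n, u n ≤ 1 :=
    fun n => aliveSum_le_one _ _ (fun w => (hker_sum_one νR hν0 hνs hν1 w).le) n z
  have hWu : ∀ n, W n ≤ u n := by
    intro n
    refine ENNReal.tsum_le_tsum fun w => ?_
    by_cases hal : aliveP (hker νR) (hset t) n z w = 0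
    · simp [hal]
    · have hwB := aliveP_mem _ _ n z w hal
      rw [mem_hset] at hwB
      refine mul_le_of_le_one_right (zero_le) ?_
      rw [← ENNReal.ofReal_one]
      refine ENNReal.ofReal_le_ofReal ?_
      rw [← Real.exp_zero]
      apply Real.exp_le_exp.2
      nlinarith
  induction N with
  | zero => simp
  | succ N ih =>
    have hstep := super_step hν0 hνs hν1 htadd hmom hmeans hmean l hl0 z N
    have hfin : W N + u N ≠ ∞ := by
      have h2 : W N + u N ≤ 2 := by
        have := add_le_add ((hWu N).trans (hu1 N)) (hu1 N)
        simpa [one_add_one_eq_two] using this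
      exact (lt_of_le_of_lt h2 (by norm_num)).ne
    refine ENNReal.le_of_add_le_add_right hfin ?_
    calc W 0 + u (N+1) + (W N + u N)
        = (W N + u (N+1)) + (W 0 + u N) := by ring
      _ ≤ (W (N+1) + u N + D N) + (W N + u 0 + ∑ n ∈ Finset.range N, D n) :=
          add_le_add hstep ih
      _ = W (N+1) + u 0 + (∑ n ∈ Finset.range N, D n + D N) + (W N + u N) := by ring
      _ = W (N+1) + u 0 + ∑ n ∈ Finset.range (N+1), D n + (W N + u N) := by
          rw [Finset.sum_range_succ]

include hν0 hνs hν1 htadd hmom in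
/-- one-step overshoot bound: from a point at height `t v > 0`, the expected overshoot
error is exponentially small in `⌊t v⌋`. -/
lemma dstep_bound (c : ℝ) (hc : 0 ≤ c) (l : ℝ) (hl0 : 0 < l) (hl1 : l ≤ 1)
    (v : Z2) (hv : 0 < t v) :
    dstep νR t l v ≤ ENNReal.ofReal l * ENNReal.ofReal (Real.exp (-(c * (⌊t v⌋₊ : ℝ))))
      * ENNReal.ofReal (∑' ξ, νR ξ * Real.exp ((c+1) * |t ξ|)) := by
  have hΦs : Summable (fun ξ => νR ξ * Real.exp ((c+1) * |t ξ|)) := by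
    refine Summable.of_nonneg_of_le
      (fun ξ => mul_nonneg (hν0 ξ) (Real.exp_pos _).le) (fun ξ => ?_)
      ((hmom (c+1)).add (hmom (-(c+1))))
    have h1 : Real.exp ((c+1) * |t ξ|) ≤ Real.exp ((c+1) * t ξ) + Real.exp (-(c+1) * t ξ) := by
      rcases abs_cases (t ξ) with ⟨h, _⟩ | ⟨h, _⟩
      · rw [h]
        nlinarith [(Real.exp_pos (-(c+1) * t ξ)).le]
      · rw [h, show (c+1) * -t ξ = -(c+1) * t ξ by ring]
        nlinarith [(Real.exp_pos ((c+1) * t ξ)).le]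
    have := mul_le_mul_of_nonneg_left h1 (hν0 ξ)
    simpa [mul_add, neg_mul] using this
  rw [show ENNReal.ofReal (∑' ξ, νR ξ * Real.exp ((c+1) * |t ξ|))
      = ∑' ξ, ENNReal.ofReal (νR ξ * Real.exp ((c+1) * |t ξ|)) from
      ENNReal.ofReal_tsum_of_nonneg (fun ξ => mul_nonneg (hν0 ξ) (Real.exp_pos _).le) hΦs]
  simp only [dstep]
  rw [← ENNReal.tsum_mul_left]
  refine ENNReal.tsum_le_tsum fun ξ => ?_
  by_cases hcond : t v + t ξ ≤ 0
  · rw [if_pos hcond]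
    have hs : 0 < -t ξ := by linarith
    have hjR : (⌊t v⌋₊ : ℝ) ≤ -t ξ := (Nat.floor_le hv.le).trans (by linarith)
    have hreal : Real.exp (l * (-t ξ)) - 1
        ≤ l * (Real.exp (-(c * (⌊t v⌋₊ : ℝ))) * Real.exp ((c+1) * |t ξ|)) := by
      have habs : |t ξ| = -t ξ := abs_of_neg (by linarith)
      have hconv : Real.exp (l * (-t ξ)) ≤ 1 + l * (Real.exp (-t ξ) - 1) := by
        have := convexOn_exp.2 (Set.mem_univ (-t ξ)) (Set.mem_univ 0) hl0.le
          (by linarith : (0:ℝ) ≤ 1 - l) (by ring)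
        simp only [smul_eq_mul, mul_zero, add_zero, Real.exp_zero, mul_one] at this
        linarith
      have hkey : Real.exp (-t ξ) ≤ Real.exp (-(c * (⌊t v⌋₊ : ℝ))) * Real.exp ((c+1) * |t ξ|) := by
        rw [← Real.exp_add, habs]
        apply Real.exp_le_exp.2
        nlinarith [hjR, hs, hc]
      have h1 : Real.exp (-t ξ) - 1 ≤ Real.exp (-(c * (⌊t v⌋₊ : ℝ))) * Real.exp ((c+1) * |t ξ|) := by
        nlinarith
      nlinarith [hl0.le, Real.exp_pos (-t ξ), hconv]
    calc ENNReal.ofReal (νR ξ) * ENNReal.ofReal (Real.exp (l * (-t ξ)) - 1)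
        ≤ ENNReal.ofReal (νR ξ) * ENNReal.ofReal
            (l * (Real.exp (-(c * (⌊t v⌋₊ : ℝ))) * Real.exp ((c+1) * |t ξ|))) :=
          mul_le_mul_right (ENNReal.ofReal_le_ofReal hreal) _
      _ = ENNReal.ofReal l * (ENNReal.ofReal (Real.exp (-(c * (⌊t v⌋₊ : ℝ))))
            * ENNReal.ofReal (νR ξ * Real.exp ((c+1) * |t ξ|))) := by
          rw [ENNReal.ofReal_mul hl0.le, ENNReal.ofReal_mul (Real.exp_pos _).le,
            ENNReal.ofReal_mul (hν0 ξ)]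
          ring
      _ = ENNReal.ofReal l * ENNReal.ofReal (Real.exp (-(c * (⌊t v⌋₊ : ℝ))))
            * ENNReal.ofReal (νR ξ * Real.exp ((c+1) * |t ξ|)) := by ring
  · rw [if_neg hcond]
    exact zero_le

include hν0 hνs hν1 htadd hξ₀ ht₀ hmom in
lemma dsum_bound (z : Z2) : ∃ C : ℝ≥0∞, C ≠ ∞ ∧ ∀ l : ℝ, 0 < l → l ≤ 1 →
    ∑' n, ∑' v, aliveP (hker νR) (hset t) n z v * dstep νR t l v
      ≤ ENNReal.ofReal l * C := by
  have hε : 0 < -t ξ₀ := by linarith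
  have hp0 : 0 < νR ξ₀ := hξ₀
  have hp1 : νR ξ₀ ≤ 1 := by
    rw [← hν1]; exact hνs.le_tsum ξ₀ (fun _ _ => hν0 _)
  set ε : ℝ := -t ξ₀ with hεdef
  set β : ℝ := 1/ε + 1 with hβdef
  have hβ : 0 < β := by positivity
  have hlog : 0 ≤ Real.log (νR ξ₀)⁻¹ := by
    rw [Real.log_inv]
    linarith [Real.log_nonpos hp0.le hp1]
  set α : ℝ := β * (1 + Real.log (νR ξ₀)⁻¹) with hαdef
  have hα : 0 ≤ α := by positivity
  set c : ℝ := α + 1 with hcdef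
  have hc : 0 ≤ c := by positivity
  set kj : ℕ → ℕ := fun j => ⌈((j:ℝ)+1)/ε⌉₊ with hkjdef
  set Φr : ℝ := ∑' ξ, νR ξ * Real.exp ((c+1) * |t ξ|) with hΦdef
  have hrlt1 : ENNReal.ofReal (Real.exp (-1)) < 1 := by
    rw [← ENNReal.ofReal_one]
    refine (ENNReal.ofReal_lt_ofReal_iff (by norm_num)).2 ?_
    rw [← Real.exp_zero]
    exact Real.exp_lt_exp.2 (by norm_num)
  refine ⟨ENNReal.ofReal Φr * (ENNReal.ofReal (Real.exp α)
    * (1 - ENNReal.ofReal (Real.exp (-1)))⁻¹), ?_, ?_⟩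
  · refine ENNReal.mul_ne_top ENNReal.ofReal_ne_top (ENNReal.mul_ne_top ENNReal.ofReal_ne_top ?_)
    refine ENNReal.inv_ne_top.2 ?_
    rw [ne_eq, tsub_eq_zero_iff_le]
    exact fun h => absurd h (not_le.2 hrlt1)
  intro l hl0 hl1
  have hA : ∀ n : ℕ, ∑' v, aliveP (hker νR) (hset t) n z v * dstep νR t l v
      ≤ ENNReal.ofReal l * ENNReal.ofReal Φr
        * ∑' v, aliveP (hker νR) (hset t) n z v
            * ENNReal.ofReal (Real.exp (-(c * (⌊t v⌋₊ : ℝ)))) := by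
    intro n
    rw [← ENNReal.tsum_mul_left]
    refine ENNReal.tsum_le_tsum fun v => ?_
    by_cases hal : aliveP (hker νR) (hset t) n z v = 0
    · simp [hal]
    · have hv : 0 < t v := (mem_hset t).1 (aliveP_mem _ _ n z v hal)
      calc aliveP (hker νR) (hset t) n z v * dstep νR t l v
          ≤ aliveP (hker νR) (hset t) n z v * (ENNReal.ofReal l
              * ENNReal.ofReal (Real.exp (-(c * (⌊t v⌋₊ : ℝ)))) * ENNReal.ofReal Φr) :=
            mul_le_mul_right (dstep_bound hν0 hνs hν1 htadd hmom c hc l hl0 hl1 v hv) _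
        _ = ENNReal.ofReal l * ENNReal.ofReal Φr * (aliveP (hker νR) (hset t) n z v
              * ENNReal.ofReal (Real.exp (-(c * (⌊t v⌋₊ : ℝ))))) := by ring
  have hB : ∑' (n : ℕ), ∑' v, aliveP (hker νR) (hset t) n z v
        * ENNReal.ofReal (Real.exp (-(c * (⌊t v⌋₊ : ℝ))))
      ≤ ∑' j : ℕ, ENNReal.ofReal (Real.exp (-(c * (j:ℝ))))
          * ∑' (n : ℕ), ∑' v, (if t v ≤ (kj j : ℝ) * (-t ξ₀)
              then aliveP (hker νR) (hset t) n z v else 0) := by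
    have hexp : ∀ (n : ℕ) (v : Z2), aliveP (hker νR) (hset t) n z v
        * ENNReal.ofReal (Real.exp (-(c * (⌊t v⌋₊ : ℝ))))
        = ∑' j : ℕ, (if j = ⌊t v⌋₊ then aliveP (hker νR) (hset t) n z v
            * ENNReal.ofReal (Real.exp (-(c * (j:ℝ)))) else 0) := by
      intro n v
      rw [tsum_eq_single ⌊t v⌋₊ (fun j hj => if_neg hj)]
      rw [if_pos rfl]
    calc ∑' (n : ℕ), ∑' v, aliveP (hker νR) (hset t) n z v
          * ENNReal.ofReal (Real.exp (-(c * (⌊t v⌋₊ : ℝ))))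
        = ∑' (n : ℕ), ∑' v, ∑' j : ℕ, (if j = ⌊t v⌋₊ then aliveP (hker νR) (hset t) n z v
            * ENNReal.ofReal (Real.exp (-(c * (j:ℝ)))) else 0) := by
          exact tsum_congr fun n => tsum_congr fun v => hexp n v
      _ = ∑' j : ℕ, ∑' (n : ℕ), ∑' v, (if j = ⌊t v⌋₊ then aliveP (hker νR) (hset t) n z v
            * ENNReal.ofReal (Real.exp (-(c * (j:ℝ)))) else 0) := by
          have h1 : (∑' (n : ℕ), ∑' (v : Z2), ∑' (j : ℕ),
              (if j = ⌊t v⌋₊ then aliveP (hker νR) (hset t) n z v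
                * ENNReal.ofReal (Real.exp (-(c * (j:ℝ)))) else 0))
              = ∑' (n : ℕ), ∑' (j : ℕ), ∑' (v : Z2),
              (if j = ⌊t v⌋₊ then aliveP (hker νR) (hset t) n z v
                * ENNReal.ofReal (Real.exp (-(c * (j:ℝ)))) else 0) :=
            tsum_congr fun n => ENNReal.tsum_comm
          rw [h1]
          exact ENNReal.tsum_comm
      _ ≤ ∑' j : ℕ, ∑' (n : ℕ), ∑' v, ENNReal.ofReal (Real.exp (-(c * (j:ℝ))))
            * (if t v ≤ (kj j : ℝ) * (-t ξ₀) then aliveP (hker νR) (hset t) n z v else 0) := by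
          refine ENNReal.tsum_le_tsum fun j => ENNReal.tsum_le_tsum fun n =>
            ENNReal.tsum_le_tsum fun v => ?_
          by_cases hcond : j = ⌊t v⌋₊
          · rw [if_pos hcond]
            by_cases hal : aliveP (hker νR) (hset t) n z v = 0
            · simp [hal]
            · have hv : 0 < t v := (mem_hset t).1 (aliveP_mem _ _ n z v hal)
              have h1 : t v ≤ (kj j : ℝ) * (-t ξ₀) := by
                have h2 : t v < (j : ℝ) + 1 := by
                  rw [hcond]; exact Nat.lt_floor_add_one (t v)
                have h3 : ((j:ℝ)+1)/ε ≤ (kj j : ℝ) := Nat.le_ceil _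
                have h4 : ((j:ℝ)+1) ≤ (kj j : ℝ) * ε := by
                  rw [div_le_iff₀ hε] at h3
                  linarith
                rw [← hεdef]
                linarith
              rw [if_pos h1, mul_comm]
          · rw [if_neg hcond]
            exact zero_le
      _ = ∑' j : ℕ, ENNReal.ofReal (Real.exp (-(c * (j:ℝ))))
            * ∑' (n : ℕ), ∑' v, (if t v ≤ (kj j : ℝ) * (-t ξ₀)
                then aliveP (hker νR) (hset t) n z v else 0) := by
          refine tsum_congr fun j => ?_
          rw [← ENNReal.tsum_mul_left]
          exact tsum_congr fun n => ENNReal.tsum_mul_left.symm ▸ ENNReal.tsum_mul_left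
  have hC : ∀ j : ℕ, ∑' (n : ℕ), ∑' v, (if t v ≤ (kj j : ℝ) * (-t ξ₀)
        then aliveP (hker νR) (hset t) n z v else 0)
      ≤ (kj j : ℝ≥0∞) / ENNReal.ofReal (νR ξ₀ ^ (kj j)) :=
    fun j => strip_time hν0 hνs hν1 htadd hξ₀ ht₀ z (kj j)
  have hD : ∑' j : ℕ, ENNReal.ofReal (Real.exp (-(c * (j:ℝ))))
        * ((kj j : ℝ≥0∞) / ENNReal.ofReal (νR ξ₀ ^ (kj j)))
      ≤ ENNReal.ofReal (Real.exp α) * (1 - ENNReal.ofReal (Real.exp (-1)))⁻¹ := by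
    have hterm : ∀ j : ℕ, ENNReal.ofReal (Real.exp (-(c * (j:ℝ))))
        * ((kj j : ℝ≥0∞) / ENNReal.ofReal (νR ξ₀ ^ (kj j)))
        ≤ ENNReal.ofReal (Real.exp α) * ENNReal.ofReal (Real.exp (-1)) ^ j := by
      intro j
      have hK1 : (1:ℝ) ≤ (kj j : ℝ) := by
        have : 0 < kj j := Nat.ceil_pos.2 (div_pos (by positivity) hε)
        exact_mod_cast this
      have hKβ : (kj j : ℝ) ≤ β * ((j:ℝ)+1) := by
        have h1 : (kj j : ℝ) < ((j:ℝ)+1)/ε + 1 := Nat.ceil_lt_add_one (le_of_lt (div_pos (by positivity) hε))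
        have h2 : (1:ℝ) ≤ (j:ℝ)+1 := by
          have := Nat.cast_nonneg (α := ℝ) j
          linarith
        calc (kj j : ℝ) ≤ ((j:ℝ)+1)/ε + 1 := h1.le
          _ ≤ ((j:ℝ)+1) * (1/ε) + ((j:ℝ)+1) := by
              rw [div_eq_mul_one_div]
              linarith
          _ = β * ((j:ℝ)+1) := by rw [hβdef]; ring
      have hpk : νR ξ₀ ^ (kj j) = Real.exp ((kj j : ℝ) * Real.log (νR ξ₀)) := by
        rw [Real.exp_nat_mul, Real.exp_log hp0]
      have hreal : Real.exp (-(c * (j:ℝ))) * ((kj j : ℝ) / νR ξ₀ ^ (kj j))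
          ≤ Real.exp α * Real.exp (-1) ^ j := by
        have hkexp : (kj j : ℝ) ≤ Real.exp (kj j : ℝ) := by
          linarith [Real.add_one_le_exp (kj j : ℝ)]
        have hdiv : ((kj j : ℝ) / νR ξ₀ ^ (kj j))
            = (kj j : ℝ) * Real.exp ((kj j : ℝ) * Real.log (νR ξ₀)⁻¹) := by
          rw [Real.log_inv, hpk, div_eq_mul_inv, ← Real.exp_neg]
          ring_nf
        have h5 : ((kj j : ℝ) / νR ξ₀ ^ (kj j))
            ≤ Real.exp ((kj j : ℝ) * (1 + Real.log (νR ξ₀)⁻¹)) := by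
          rw [hdiv]
          calc (kj j : ℝ) * Real.exp ((kj j : ℝ) * Real.log (νR ξ₀)⁻¹)
              ≤ Real.exp (kj j : ℝ) * Real.exp ((kj j : ℝ) * Real.log (νR ξ₀)⁻¹) :=
                mul_le_mul_of_nonneg_right hkexp (Real.exp_pos _).le
            _ = Real.exp ((kj j : ℝ) * (1 + Real.log (νR ξ₀)⁻¹)) := by
                rw [← Real.exp_add]; ring_nf
        have h6 : (kj j : ℝ) * (1 + Real.log (νR ξ₀)⁻¹) ≤ ((j:ℝ)+1) * α := by
          rw [hαdef]
          calc (kj j : ℝ) * (1 + Real.log (νR ξ₀)⁻¹)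
              ≤ (β * ((j:ℝ)+1)) * (1 + Real.log (νR ξ₀)⁻¹) :=
                mul_le_mul_of_nonneg_right hKβ (by linarith)
            _ = ((j:ℝ)+1) * (β * (1 + Real.log (νR ξ₀)⁻¹)) := by ring
        have h7 : ((kj j : ℝ) / νR ξ₀ ^ (kj j)) ≤ Real.exp (((j:ℝ)+1) * α) :=
          h5.trans (Real.exp_le_exp.2 h6)
        have h8 : Real.exp (-(c * (j:ℝ))) * Real.exp (((j:ℝ)+1) * α)
            = Real.exp α * Real.exp (-1) ^ j := by
          rw [← Real.exp_add, ← Real.exp_nat_mul, ← Real.exp_add]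
          congr 1
          rw [hcdef]; ring
        calc Real.exp (-(c * (j:ℝ))) * ((kj j : ℝ) / νR ξ₀ ^ (kj j))
            ≤ Real.exp (-(c * (j:ℝ))) * Real.exp (((j:ℝ)+1) * α) :=
              mul_le_mul_of_nonneg_left h7 (Real.exp_pos _).le
          _ = Real.exp α * Real.exp (-1) ^ j := h8
      calc ENNReal.ofReal (Real.exp (-(c * (j:ℝ))))
            * ((kj j : ℝ≥0∞) / ENNReal.ofReal (νR ξ₀ ^ (kj j)))
          = ENNReal.ofReal (Real.exp (-(c * (j:ℝ))) * ((kj j : ℝ) / νR ξ₀ ^ (kj j))) := by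
            rw [← ENNReal.ofReal_natCast (kj j),
              ← ENNReal.ofReal_div_of_pos (pow_pos hp0 _),
              ← ENNReal.ofReal_mul (Real.exp_pos _).le]
        _ ≤ ENNReal.ofReal (Real.exp α * Real.exp (-1) ^ j) := ENNReal.ofReal_le_ofReal hreal
        _ = ENNReal.ofReal (Real.exp α) * ENNReal.ofReal (Real.exp (-1)) ^ j := by
            rw [ENNReal.ofReal_mul (Real.exp_pos _).le, ENNReal.ofReal_pow (Real.exp_pos _).le]
    calc ∑' j : ℕ, ENNReal.ofReal (Real.exp (-(c * (j:ℝ))))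
          * ((kj j : ℝ≥0∞) / ENNReal.ofReal (νR ξ₀ ^ (kj j)))
        ≤ ∑' j : ℕ, ENNReal.ofReal (Real.exp α) * ENNReal.ofReal (Real.exp (-1)) ^ j :=
          ENNReal.tsum_le_tsum hterm
      _ = ENNReal.ofReal (Real.exp α) * ∑' j : ℕ, ENNReal.ofReal (Real.exp (-1)) ^ j :=
          ENNReal.tsum_mul_left
      _ = ENNReal.ofReal (Real.exp α) * (1 - ENNReal.ofReal (Real.exp (-1)))⁻¹ := by
          rw [ENNReal.tsum_geometric]
  calc ∑' n, ∑' v, aliveP (hker νR) (hset t) n z v * dstep νR t l v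
      ≤ ∑' (n : ℕ), ENNReal.ofReal l * ENNReal.ofReal Φr
          * ∑' v, aliveP (hker νR) (hset t) n z v
              * ENNReal.ofReal (Real.exp (-(c * (⌊t v⌋₊ : ℝ)))) := ENNReal.tsum_le_tsum hA
    _ = ENNReal.ofReal l * ENNReal.ofReal Φr * ∑' (n : ℕ), ∑' v,
          aliveP (hker νR) (hset t) n z v
            * ENNReal.ofReal (Real.exp (-(c * (⌊t v⌋₊ : ℝ)))) := ENNReal.tsum_mul_left
    _ ≤ ENNReal.ofReal l * ENNReal.ofReal Φr * ∑' j : ℕ,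
          ENNReal.ofReal (Real.exp (-(c * (j:ℝ))))
            * ∑' (n : ℕ), ∑' v, (if t v ≤ (kj j : ℝ) * (-t ξ₀)
                then aliveP (hker νR) (hset t) n z v else 0) := mul_le_mul_right hB _
    _ ≤ ENNReal.ofReal l * ENNReal.ofReal Φr * ∑' j : ℕ,
          ENNReal.ofReal (Real.exp (-(c * (j:ℝ))))
            * ((kj j : ℝ≥0∞) / ENNReal.ofReal (νR ξ₀ ^ (kj j))) :=
        mul_le_mul_right (ENNReal.tsum_le_tsum fun j => mul_le_mul_right (hC j) _) _
    _ ≤ ENNReal.ofReal l * ENNReal.ofReal Φr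
          * (ENNReal.ofReal (Real.exp α) * (1 - ENNReal.ofReal (Real.exp (-1)))⁻¹) :=
        mul_le_mul_right hD _
    _ = ENNReal.ofReal l * (ENNReal.ofReal Φr * (ENNReal.ofReal (Real.exp α)
          * (1 - ENNReal.ofReal (Real.exp (-1)))⁻¹)) := by ring

include hν0 hνs hν1 htadd hξ₀ ht₀ hmom hmeans hmean in
/-- Main half-plane result: the walk with zero-mean projection exits the half-plane
`{0 < t}` almost surely. -/
lemma halfplane_alive_iInf_zero (z : Z2) :
    ⨅ n : ℕ, ∑' w, aliveP (hker νR) (hset t) n z w = 0 := by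
  by_cases hz : z ∈ hset t
  swap
  · refine le_antisymm ?_ (zero_le)
    refine (iInf_le _ 0).trans ?_
    simp [aliveP_start_notMem _ _ 0 z _ hz]
  have htz : 0 < t z := (mem_hset t).1 hz
  set u : ℕ → ℝ≥0∞ := fun n => ∑' w, aliveP (hker νR) (hset t) n z w with hu
  set L : ℝ≥0∞ := ⨅ n : ℕ, u n with hL
  show L = 0
  have hu1 : ∀ n, u n ≤ 1 :=
    fun n => aliveSum_le_one _ _ (fun w => (hker_sum_one νR hν0 hνs hν1 w).le) n z
  have hL1 : L ≤ 1 := (iInf_le _ 0).trans (hu1 0)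
  have hLfin : L ≠ ∞ := (hL1.trans_lt ENNReal.one_lt_top).ne
  have hp0 : 0 < νR ξ₀ := hξ₀
  have hε : 0 < -t ξ₀ := by linarith
  obtain ⟨C, hCfin, hCb⟩ := dsum_bound hν0 hνs hν1 htadd hξ₀ ht₀ hmom z
  -- main estimate
  have hmain : ∀ l : ℝ, 0 < l → l ≤ 1 → ∀ k : ℕ, ∀ η : ℝ, 0 < η →
      ENNReal.ofReal (Real.exp (-l * t z))
        + ENNReal.ofReal (1 - Real.exp (-l * ((k:ℝ) * (-t ξ₀)))) * L
      ≤ 1 + ENNReal.ofReal l * C + ENNReal.ofReal η / ENNReal.ofReal (νR ξ₀ ^ k) := by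
    intro l hl0 hl1 k η hη
    have hη' : (0:ℝ≥0∞) < ENNReal.ofReal η := ENNReal.ofReal_pos.2 hη
    obtain ⟨N, hN⟩ : ∃ N, u N < L + ENNReal.ofReal η := by
      refine iInf_lt_iff.1 ?_
      exact lt_of_le_of_lt le_rfl (ENNReal.lt_add_right hLfin hη'.ne')
    set E : Z2 → ℝ≥0∞ := fun w => ENNReal.ofReal (Real.exp (-l * t w)) with hE
    set bNear : ℝ≥0∞ := ∑' v, (if t v ≤ (k:ℝ) * (-t ξ₀)
      then aliveP (hker νR) (hset t) N z v else 0) with hbNear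
    set bFar : ℝ≥0∞ := ∑' v, (if t v ≤ (k:ℝ) * (-t ξ₀)
      then 0 else aliveP (hker νR) (hset t) N z v) with hbFar
    have hsplit : bNear + bFar = u N := by
      rw [hbNear, hbFar, hu, ← ENNReal.tsum_add]
      refine tsum_congr fun v => ?_
      by_cases hc : t v ≤ (k:ℝ) * (-t ξ₀)
      · rw [if_pos hc, if_pos hc, add_zero]
      · rw [if_neg hc, if_neg hc, zero_add]
    have hstepdown := step_down hν0 hνs hν1 htadd hξ₀ ht₀ z N k
    have hbNear_small : ENNReal.ofReal (νR ξ₀ ^ k) * bNear ≤ ENNReal.ofReal η := by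
      have h1 : L + ENNReal.ofReal (νR ξ₀ ^ k) * bNear ≤ L + ENNReal.ofReal η := by
        calc L + ENNReal.ofReal (νR ξ₀ ^ k) * bNear
            ≤ u (N + k) + ENNReal.ofReal (νR ξ₀ ^ k) * bNear :=
              add_le_add_left (iInf_le _ (N+k)) _
          _ ≤ u N := hstepdown
          _ ≤ L + ENNReal.ofReal η := hN.le
      exact ENNReal.le_of_add_le_add_left hLfin h1
    have hd0 : ENNReal.ofReal (νR ξ₀ ^ k) ≠ 0 := by
      simp [ENNReal.ofReal_eq_zero, not_le, pow_pos hp0]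
    have hbNear2 : bNear ≤ ENNReal.ofReal η / ENNReal.ofReal (νR ξ₀ ^ k) := by
      rw [ENNReal.le_div_iff_mul_le (Or.inl hd0) (Or.inl ENNReal.ofReal_ne_top), mul_comm]
      exact hbNear_small
    have hLfar : L ≤ bFar + ENNReal.ofReal η / ENNReal.ofReal (νR ξ₀ ^ k) := by
      calc L ≤ u N := iInf_le _ N
        _ = bNear + bFar := hsplit.symm
        _ ≤ ENNReal.ofReal η / ENNReal.ofReal (νR ξ₀ ^ k) + bFar := add_le_add_left hbNear2 _
        _ = _ := by ring
    set W : ℕ → ℝ≥0∞ := fun n => ∑' w, aliveP (hker νR) (hset t) n z w * E w with hW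
    set V : ℝ≥0∞ := ∑' w, aliveP (hker νR) (hset t) N z w
      * ENNReal.ofReal (1 - Real.exp (-l * t w)) with hV
    have hWV : W N + V = u N := by
      rw [hW, hV, hu, ← ENNReal.tsum_add]
      refine tsum_congr fun w => ?_
      by_cases hal : aliveP (hker νR) (hset t) N z w = 0
      · simp [hal]
      · have hw : 0 < t w := (mem_hset t).1 (aliveP_mem _ _ N z w hal)
        have he1 : Real.exp (-l * t w) ≤ 1 := by
          rw [← Real.exp_zero]
          apply Real.exp_le_exp.2
          nlinarith
        rw [← mul_add, ← ENNReal.ofReal_add (Real.exp_pos _).le (by linarith)]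
        norm_num
    have hW0 : W 0 = ENNReal.ofReal (Real.exp (-l * t z)) := by
      rw [hW]
      simp only
      rw [tsum_eq_single z (fun w hw => by
        rw [aliveP_zero, if_neg, zero_mul]
        exact fun h => hw h.1)]
      rw [aliveP_zero, if_pos ⟨rfl, hz⟩, one_mul]
    have hWN1 : W N ≤ 1 := by
      refine le_trans ?_ (hu1 N)
      rw [hW, hu]
      refine ENNReal.tsum_le_tsum fun w => ?_
      by_cases hal : aliveP (hker νR) (hset t) N z w = 0
      · simp [hal]
      · have hw : 0 < t w := (mem_hset t).1 (aliveP_mem _ _ N z w hal)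
        refine mul_le_of_le_one_right (zero_le) ?_
        rw [← ENNReal.ofReal_one]
        refine ENNReal.ofReal_le_ofReal ?_
        rw [← Real.exp_zero]
        apply Real.exp_le_exp.2
        nlinarith
    have htele := super_tele hν0 hνs hν1 htadd hmom hmeans hmean l hl0 z N
    have hSD : ∑ n ∈ Finset.range N, ∑' v, aliveP (hker νR) (hset t) n z v * dstep νR t l v
        ≤ ENNReal.ofReal l * C := by
      refine le_trans ?_ (hCb l hl0 hl1)
      exact ENNReal.sum_le_tsum (Finset.range N)
    have hW0V : W 0 + V ≤ 1 + ENNReal.ofReal l * C := by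
      have h2 : W 0 + V + W N ≤ W N + 1 + ENNReal.ofReal l * C := by
        calc W 0 + V + W N = W 0 + u N := by rw [← hWV]; ring
          _ ≤ W N + u 0 + ∑ n ∈ Finset.range N,
                ∑' v, aliveP (hker νR) (hset t) n z v * dstep νR t l v := htele
          _ ≤ W N + 1 + ENNReal.ofReal l * C := by
              exact add_le_add (add_le_add_right (hu1 0) _) hSD
      have h3 : W 0 + V + W N ≤ W N + (1 + ENNReal.ofReal l * C) := by
        calc W 0 + V + W N ≤ W N + 1 + ENNReal.ofReal l * C := h2
          _ = W N + (1 + ENNReal.ofReal l * C) := by ring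
      have hfinW : W N ≠ ∞ := (hWN1.trans_lt ENNReal.one_lt_top).ne
      calc W 0 + V = W N + (W 0 + V) - W N := by
            rw [ENNReal.add_sub_cancel_left hfinW]
        _ ≤ W N + (1 + ENNReal.ofReal l * C) - W N := by
            refine tsub_le_tsub_right ?_ _
            calc W N + (W 0 + V) = W 0 + V + W N := by ring
              _ ≤ W N + (1 + ENNReal.ofReal l * C) := h3
        _ = 1 + ENNReal.ofReal l * C := ENNReal.add_sub_cancel_left hfinW
    have hq1 : ENNReal.ofReal (1 - Real.exp (-l * ((k:ℝ) * (-t ξ₀)))) ≤ 1 := by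
      rw [← ENNReal.ofReal_one]
      refine ENNReal.ofReal_le_ofReal ?_
      have := Real.exp_pos (-l * ((k:ℝ) * (-t ξ₀)))
      linarith
    have hVfar : ENNReal.ofReal (1 - Real.exp (-l * ((k:ℝ) * (-t ξ₀)))) * bFar ≤ V := by
      rw [hbFar, ← ENNReal.tsum_mul_left, hV]
      refine ENNReal.tsum_le_tsum fun v => ?_
      by_cases hc : t v ≤ (k:ℝ) * (-t ξ₀)
      · rw [if_pos hc, mul_zero]
        exact zero_le
      · rw [if_neg hc]
        push_neg at hc
        rw [mul_comm]
        refine mul_le_mul_right (ENNReal.ofReal_le_ofReal ?_) _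
        have hee : Real.exp (-l * t v) ≤ Real.exp (-l * ((k:ℝ) * (-t ξ₀))) := by
          apply Real.exp_le_exp.2
          nlinarith
        linarith
    calc ENNReal.ofReal (Real.exp (-l * t z))
          + ENNReal.ofReal (1 - Real.exp (-l * ((k:ℝ) * (-t ξ₀)))) * L
        ≤ W 0 + ENNReal.ofReal (1 - Real.exp (-l * ((k:ℝ) * (-t ξ₀))))
            * (bFar + ENNReal.ofReal η / ENNReal.ofReal (νR ξ₀ ^ k)) := by
          rw [hW0]
          exact add_le_add_right (mul_le_mul_right hLfar _) _
      _ ≤ W 0 + (V + ENNReal.ofReal η / ENNReal.ofReal (νR ξ₀ ^ k)) := by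
          refine add_le_add_right ?_ _
          rw [mul_add]
          exact add_le_add hVfar (mul_le_of_le_one_left (zero_le) hq1)
      _ = (W 0 + V) + ENNReal.ofReal η / ENNReal.ofReal (νR ξ₀ ^ k) := by ring
      _ ≤ 1 + ENNReal.ofReal l * C + ENNReal.ofReal η / ENNReal.ofReal (νR ξ₀ ^ k) :=
          add_le_add_left hW0V _
  -- remove η
  have hmain2 : ∀ l : ℝ, 0 < l → l ≤ 1 → ∀ k : ℕ,
      ENNReal.ofReal (Real.exp (-l * t z))
        + ENNReal.ofReal (1 - Real.exp (-l * ((k:ℝ) * (-t ξ₀)))) * L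
      ≤ 1 + ENNReal.ofReal l * C := by
    intro l hl0 hl1 k
    refine ENNReal.le_of_forall_pos_le_add fun δ hδ hfin => ?_
    have hpk : (0:ℝ) < νR ξ₀ ^ k := pow_pos hp0 k
    have hδr : (0:ℝ) < (δ:ℝ) * νR ξ₀ ^ k := by positivity
    refine le_trans (hmain l hl0 hl1 k ((δ:ℝ) * νR ξ₀ ^ k) hδr) ?_
    have heq : ENNReal.ofReal ((δ:ℝ) * νR ξ₀ ^ k) / ENNReal.ofReal (νR ξ₀ ^ k) = (δ : ℝ≥0∞) := by
      rw [← ENNReal.ofReal_div_of_pos hpk, mul_div_assoc, div_self hpk.ne', mul_one,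
        ENNReal.ofReal_coe_nnreal]
    rw [heq]
  -- take k to infinity
  have hmain3 : ∀ l : ℝ, 0 < l → l ≤ 1 →
      ENNReal.ofReal (Real.exp (-l * t z)) + L ≤ 1 + ENNReal.ofReal l * C := by
    intro l hl0 hl1
    have hq : (⨆ k : ℕ, ENNReal.ofReal (1 - Real.exp (-l * ((k:ℝ) * (-t ξ₀))))) = 1 := by
      refine le_antisymm (iSup_le fun k => ?_) ?_
      · rw [← ENNReal.ofReal_one]
        refine ENNReal.ofReal_le_ofReal ?_
        have := Real.exp_pos (-l * ((k:ℝ) * (-t ξ₀)))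
        linarith
      · have hr1 : Real.exp (-l * (-t ξ₀)) < 1 := by
          rw [← Real.exp_zero]
          apply Real.exp_lt_exp.2
          nlinarith
        have htnd : Filter.Tendsto (fun k : ℕ => ENNReal.ofReal
            (1 - Real.exp (-l * ((k:ℝ) * (-t ξ₀))))) Filter.atTop (nhds (ENNReal.ofReal 1)) := by
          refine (ENNReal.continuous_ofReal.tendsto 1).comp ?_
          have h2 : Filter.Tendsto (fun k : ℕ => Real.exp (-l * (-t ξ₀)) ^ k)
              Filter.atTop (nhds 0) :=
            tendsto_pow_atTop_nhds_zero_of_lt_one (Real.exp_pos _).le hr1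
          have h3 : ∀ k : ℕ, Real.exp (-l * ((k:ℝ) * (-t ξ₀))) = Real.exp (-l * (-t ξ₀)) ^ k := by
            intro k
            rw [← Real.exp_nat_mul]
            ring_nf
          have h4 : Filter.Tendsto (fun k : ℕ => Real.exp (-l * ((k:ℝ) * (-t ξ₀))))
              Filter.atTop (nhds 0) := by
            simpa only [← h3] using h2
          have := h4.const_sub 1
          simpa using this
        rw [ENNReal.ofReal_one] at htnd
        exact le_of_tendsto' htnd fun k => le_iSup
          (fun k : ℕ => ENNReal.ofReal (1 - Real.exp (-l * ((k:ℝ) * (-t ξ₀))))) k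
    calc ENNReal.ofReal (Real.exp (-l * t z)) + L
        = ENNReal.ofReal (Real.exp (-l * t z))
          + (⨆ k : ℕ, ENNReal.ofReal (1 - Real.exp (-l * ((k:ℝ) * (-t ξ₀))))) * L := by
          rw [hq, one_mul]
      _ = ⨆ k : ℕ, (ENNReal.ofReal (Real.exp (-l * t z))
          + ENNReal.ofReal (1 - Real.exp (-l * ((k:ℝ) * (-t ξ₀)))) * L) := by
          rw [ENNReal.iSup_mul, ENNReal.add_iSup]
      _ ≤ 1 + ENNReal.ofReal l * C := iSup_le fun k => hmain2 l hl0 hl1 k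
  -- pass to reals
  set Lr : ℝ := L.toReal with hLr
  set Cr : ℝ := C.toReal with hCr
  have hCr0 : 0 ≤ Cr := ENNReal.toReal_nonneg
  have hreal : ∀ l : ℝ, 0 < l → l ≤ 1 → Lr ≤ l * (t z + Cr) := by
    intro l hl0 hl1
    have h1 := hmain3 l hl0 hl1
    have hrhs : (1 + ENNReal.ofReal l * C) ≠ ∞ := by
      refine ENNReal.add_ne_top.2 ⟨ENNReal.one_ne_top, ?_⟩
      exact ENNReal.mul_ne_top ENNReal.ofReal_ne_top hCfin
    have h2 := ENNReal.toReal_mono hrhs h1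
    rw [ENNReal.toReal_add ENNReal.ofReal_ne_top hLfin,
      ENNReal.toReal_add ENNReal.one_ne_top
        (ENNReal.mul_ne_top ENNReal.ofReal_ne_top hCfin),
      ENNReal.toReal_ofReal (Real.exp_pos _).le, ENNReal.toReal_mul,
      ENNReal.toReal_ofReal hl0.le, ENNReal.toReal_one] at h2
    have h3 : 1 - Real.exp (-l * t z) ≤ l * t z := by
      have := Real.add_one_le_exp (-l * t z)
      linarith
    rw [← hLr, ← hCr] at h2
    linarith
  have hLr0 : Lr ≤ 0 := by
    by_contra hpos
    push_neg at hpos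
    set l : ℝ := min 1 (Lr / (2 * (t z + Cr + 1))) with hldef
    have hden : 0 < t z + Cr + 1 := by linarith
    have hl0 : 0 < l := lt_min one_pos (by positivity)
    have hl1 : l ≤ 1 := min_le_left _ _
    have h4 := hreal l hl0 hl1
    have h5 : l ≤ Lr / (2 * (t z + Cr + 1)) := min_le_right _ _
    have h6 : l * (t z + Cr) ≤ (Lr / (2 * (t z + Cr + 1))) * (t z + Cr) :=
      mul_le_mul_of_nonneg_right h5 (by linarith)
    have h7 : (Lr / (2 * (t z + Cr + 1))) * (t z + Cr) < Lr := by
      rw [div_mul_eq_mul_div, div_lt_iff₀ (by linarith)]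
      nlinarith
    linarith
  have hLrge : 0 ≤ Lr := ENNReal.toReal_nonneg
  have : Lr = 0 := le_antisymm hLr0 hLrge
  rcases (ENNReal.toReal_eq_zero_iff L).1 this with h | h
  · exact h
  · exact absurd h hLfin

end Half

section Bridge

lemma emb_add (z w : Z2) : emb (z + w) = emb z + emb w := by
  simp [emb, Prod.ext_iff]

lemma emb_zero : emb (0 : Z2) = (0, 0) := by simp [emb]

lemma dotR_add_left (x y b : R2) : dotR (x + y) b = dotR x b + dotR y b := by
  simp [dotR, Prod.fst_add, Prod.snd_add]; ring

lemma dotR_smul_left (r : ℝ) (x b : R2) : dotR (r • x) b = r * dotR x b := by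
  simp [dotR, Prod.smul_fst, Prod.smul_snd, smul_eq_mul]; ring

lemma dotR_smul_right_s13 (r : ℝ) (x b : R2) : dotR b (r • x) = r * dotR b x := by
  simp [dotR, Prod.smul_fst, Prod.smul_snd, smul_eq_mul]; ring

lemma dotR_zero_left (b : R2) : dotR (0,0) b = 0 := by simp [dotR]

lemma tproj_add (f : R2) (v w : Z2) :
    dotR f (emb (v + w)) = dotR f (emb v) + dotR f (emb w) := by
  simp [dotR, emb]
  push_cast
  ring

/-- the function `t = dotR f ∘ emb` vanishes on `0`. -/
lemma tproj_zero (f : R2) : dotR f (emb (0 : Z2)) = 0 := by simp [dotR, emb]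

lemma twKer_eq_hker (γ : Z2 → ℝ) (a : R2) :
    twKer γ a = hker (fun ξ => γ ξ * Real.exp (dotR a (emb ξ))) := rfl

/-- summability of the first-coordinate-weighted exponential sums -/
lemma summable_coord (γ : Z2 → ℝ) (hγ0 : ∀ z, 0 ≤ γ z)
    (hA3 : ∀ a : R2, Summable fun z : Z2 => γ z * Real.exp (dotR a (emb z)))
    (a : R2) (b : R2) :
    Summable (fun ξ : Z2 => γ ξ * Real.exp (dotR a (emb ξ)) * dotR b (emb ξ)) := by
  have habs : Summable (fun ξ : Z2 => γ ξ * Real.exp (dotR a (emb ξ)) * |dotR b (emb ξ)|) := by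
    refine Summable.of_nonneg_of_le
      (fun ξ => mul_nonneg (mul_nonneg (hγ0 ξ) (Real.exp_pos _).le) (abs_nonneg _))
      (fun ξ => ?_) ((hA3 (a + b)).add (hA3 (a - b)))
    have h1 : |dotR b (emb ξ)| ≤ Real.exp (dotR b (emb ξ)) + Real.exp (-dotR b (emb ξ)) := by
      rcases abs_cases (dotR b (emb ξ)) with ⟨h, _⟩ | ⟨h, _⟩
      · rw [h]; nlinarith [Real.add_one_le_exp (dotR b (emb ξ)),
          (Real.exp_pos (-dotR b (emb ξ))).le]
      · rw [h]; nlinarith [Real.add_one_le_exp (-dotR b (emb ξ)),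
          (Real.exp_pos (dotR b (emb ξ))).le]
    have h2 : dotR (a + b) (emb ξ) = dotR a (emb ξ) + dotR b (emb ξ) := dotR_add_left _ _ _
    have h3 : dotR (a - b) (emb ξ) = dotR a (emb ξ) - dotR b (emb ξ) := by
      have := dotR_add_left (a - b) b (emb ξ)
      simp only [sub_add_cancel] at this
      linarith
    have h4 := mul_le_mul_of_nonneg_left h1
      (mul_nonneg (hγ0 ξ) (Real.exp_pos (dotR a (emb ξ))).le)
    calc γ ξ * Real.exp (dotR a (emb ξ)) * |dotR b (emb ξ)|
        ≤ γ ξ * Real.exp (dotR a (emb ξ))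
            * (Real.exp (dotR b (emb ξ)) + Real.exp (-dotR b (emb ξ))) := h4
      _ = γ ξ * Real.exp (dotR (a+b) (emb ξ)) + γ ξ * Real.exp (dotR (a-b) (emb ξ)) := by
          rw [h2, h3, Real.exp_add, Real.exp_sub]
          rw [Real.exp_neg]
          field_simp
  refine Summable.of_abs ?_
  refine habs.congr fun ξ => ?_
  rw [abs_mul, abs_of_nonneg (mul_nonneg (hγ0 ξ) (Real.exp_pos _).le)]

end Bridge

section Bridge2

lemma dotR_add_right (b x y : R2) : dotR b (x + y) = dotR b x + dotR b y := by
  simp [dotR, Prod.fst_add, Prod.snd_add]; ring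

lemma tproj_sub (f : R2) (v w : Z2) :
    dotR f (emb (w - v)) = dotR f (emb w) - dotR f (emb v) := by
  have := tproj_add f (w - v) v
  rw [sub_add_cancel] at this
  linarith

/-- the projected mean of the twisted walk in the boundary direction vanishes. -/
lemma mean_zero_proj (γ : Z2 → ℝ) (hγ0 : ∀ z, 0 ≤ γ z)
    (hA3 : ∀ a : R2, Summable fun z : Z2 => γ z * Real.exp (dotR a (emb z)))
    (a f ci : R2) (haq : qmap γ a = ci) (hperp : dotR f ci = 0) (hcUnit : nrm ci = 1) :
    ∑' ξ : Z2, γ ξ * Real.exp (dotR a (emb ξ)) * dotR f (emb ξ) = 0 := by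
  have hG : nrm (gradJgf γ a) ≠ 0 := by
    intro h0
    rw [qmap, h0, inv_zero, zero_smul] at haq
    rw [← haq] at hcUnit
    rw [nrm, show dotR 0 0 = 0 by simp [dotR]] at hcUnit
    simp at hcUnit
  have hfc : dotR f ci = (nrm (gradJgf γ a))⁻¹ * dotR f (gradJgf γ a) := by
    rw [← haq, qmap, dotR_smul_right_s13]
  have hfG : dotR f (gradJgf γ a) = 0 := by
    have h1 : (nrm (gradJgf γ a))⁻¹ ≠ 0 := inv_ne_zero hG
    rw [hperp] at hfc
    rcases mul_eq_zero.1 hfc.symm with h | h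
    · exact absurd h h1
    · exact h
  have hs1 : Summable (fun ξ : Z2 => γ ξ * Real.exp (dotR a (emb ξ)) * dotR (1,0) (emb ξ)) :=
    summable_coord γ hγ0 hA3 a (1,0)
  have hs2 : Summable (fun ξ : Z2 => γ ξ * Real.exp (dotR a (emb ξ)) * dotR (0,1) (emb ξ)) :=
    summable_coord γ hγ0 hA3 a (0,1)
  have hco1 : ∀ ξ : Z2, dotR ((1:ℝ),(0:ℝ)) (emb ξ) = (ξ.1 : ℝ) := by
    intro ξ; simp [dotR, emb]
  have hco2 : ∀ ξ : Z2, dotR ((0:ℝ),(1:ℝ)) (emb ξ) = (ξ.2 : ℝ) := by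
    intro ξ; simp [dotR, emb]
  have hfun : ∀ ξ : Z2, γ ξ * Real.exp (dotR a (emb ξ)) * dotR f (emb ξ)
      = f.1 * (γ ξ * Real.exp (dotR a (emb ξ)) * (ξ.1:ℝ))
        + f.2 * (γ ξ * Real.exp (dotR a (emb ξ)) * (ξ.2:ℝ)) := by
    intro ξ
    simp only [dotR, emb]
    ring
  simp only [hco1] at hs1
  simp only [hco2] at hs2
  calc ∑' ξ : Z2, γ ξ * Real.exp (dotR a (emb ξ)) * dotR f (emb ξ)
      = ∑' ξ : Z2, (f.1 * (γ ξ * Real.exp (dotR a (emb ξ)) * (ξ.1:ℝ))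
        + f.2 * (γ ξ * Real.exp (dotR a (emb ξ)) * (ξ.2:ℝ))) := tsum_congr hfun
    _ = f.1 * (∑' ξ : Z2, γ ξ * Real.exp (dotR a (emb ξ)) * (ξ.1:ℝ))
        + f.2 * (∑' ξ : Z2, γ ξ * Real.exp (dotR a (emb ξ)) * (ξ.2:ℝ)) := by
        rw [(hs1.mul_left f.1).tsum_add (hs2.mul_left f.2), tsum_mul_left, tsum_mul_left]
    _ = dotR f (gradJgf γ a) := by
        rw [gradJgf, dotR]
    _ = 0 := hfG

lemma nstep_zero (κ : Z2 → Z2 → ℝ≥0∞) (z z' : Z2) :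
    nstep κ 0 z z' = if z' = z then 1 else 0 := rfl

lemma nstep_succ (κ : Z2 → Z2 → ℝ≥0∞) (n : ℕ) (z z' : Z2) :
    nstep κ (n+1) z z' = ∑' w, κ z w * nstep κ n w z' := rfl

/-- existence of a step with negative projection on `f`, given irreducibility and zero mean. -/
lemma exists_down_step (γ : Z2 → ℝ) (hγ0 : ∀ z, 0 ≤ γ z)
    (hA3 : ∀ a : R2, Summable fun z : Z2 => γ z * Real.exp (dotR a (emb z)))
    (a f : R2) (hfUnit : nrm f = 1)
    (hA1 : ∀ z z' : Z2, ∃ n : ℕ, 0 < nstep (twKer γ 0) n z z')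
    (hmean0 : ∑' ξ : Z2, γ ξ * Real.exp (dotR a (emb ξ)) * dotR f (emb ξ) = 0) :
    ∃ ξ₀ : Z2, 0 < γ ξ₀ * Real.exp (dotR a (emb ξ₀)) ∧ dotR f (emb ξ₀) < 0 := by
  by_contra hcon
  push_neg at hcon
  have hsupp0 : ∀ ξ : Z2, 0 < γ ξ → dotR f (emb ξ) = 0 := by
    intro ξ hξ
    have hν : 0 < γ ξ * Real.exp (dotR a (emb ξ)) := by positivity
    have hge : 0 ≤ dotR f (emb ξ) := hcon ξ hν
    by_contra hne
    have hgt : 0 < dotR f (emb ξ) := lt_of_le_of_ne hge (Ne.symm hne)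
    have hterm : 0 < γ ξ * Real.exp (dotR a (emb ξ)) * dotR f (emb ξ) := by positivity
    have hnonneg : ∀ ξ' : Z2, 0 ≤ γ ξ' * Real.exp (dotR a (emb ξ')) * dotR f (emb ξ') := by
      intro ξ'
      rcases eq_or_lt_of_le (hγ0 ξ') with h | h
      · rw [← h]; simp
      · have := hcon ξ' (by positivity)
        positivity
    have hs : Summable (fun ξ' : Z2 => γ ξ' * Real.exp (dotR a (emb ξ')) * dotR f (emb ξ')) :=
      summable_coord γ hγ0 hA3 a f
    have := hs.le_tsum ξ (fun ξ' _ => hnonneg ξ')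
    rw [hmean0] at this
    linarith
  have hline : ∀ (n : ℕ) (z z' : Z2), nstep (twKer γ 0) n z z' ≠ 0 →
      dotR f (emb z') = dotR f (emb z) := by
    intro n
    induction n with
    | zero =>
      intro z z' h
      rw [nstep_zero] at h
      by_cases hz : z' = z
      · rw [hz]
      · rw [if_neg hz] at h; exact absurd rfl h
    | succ n ih =>
      intro z z' h
      rw [nstep_succ] at h
      obtain ⟨w, hw⟩ : ∃ w, twKer γ 0 z w * nstep (twKer γ 0) n w z' ≠ 0 := by
        by_contra hall
        push_neg at hall
        exact h (by simp [hall])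
      rcases mul_ne_zero_iff.1 hw with ⟨h1, h2⟩
      have hγw : 0 < γ (w - z) := by
        rw [twKer] at h1
        by_contra hle
        push_neg at hle
        have : γ (w - z) = 0 := le_antisymm hle (hγ0 _)
        simp [this] at h1
      have ht0 : dotR f (emb (w - z)) = 0 := hsupp0 _ hγw
      have htw : dotR f (emb w) = dotR f (emb z) := by
        have := tproj_sub f z w
        rw [ht0] at this
        linarith
      rw [ih w z' h2, htw]
  have hfne : f.1 ≠ 0 ∨ f.2 ≠ 0 := by
    by_contra hboth
    push_neg at hboth
    have hf0 : f = ((0:ℝ), (0:ℝ)) := Prod.ext hboth.1 hboth.2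
    rw [hf0, nrm, show dotR ((0:ℝ),(0:ℝ)) ((0:ℝ),(0:ℝ)) = 0 by simp [dotR]] at hfUnit
    simp at hfUnit
  obtain ⟨zs, hzs⟩ : ∃ zs : Z2, dotR f (emb zs) ≠ 0 := by
    rcases hfne with h | h
    · exact ⟨(1,0), by simpa [dotR, emb] using h⟩
    · exact ⟨(0,1), by simpa [dotR, emb] using h⟩
  obtain ⟨n, hn⟩ := hA1 0 zs
  have := hline n 0 zs hn.ne'
  rw [tproj_zero] at this
  exact hzs this

/-- change of measure identity for the exit probabilities. -/
lemma exitP_twist (γ : Z2 → ℝ) (hγ0 : ∀ z, 0 ≤ γ z) (a : R2) (A : Set Z2) :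
    ∀ (n : ℕ) (z₁ z₂ : Z2), exitP (twKer γ 0) A n z₁ z₂
        * ENNReal.ofReal (Real.exp (dotR a (emb (z₂ - z₁))))
      = exitP (twKer γ a) A n z₁ z₂ := by
  intro n
  induction n with
  | zero =>
    intro z₁ z₂
    rw [exitP_zero, exitP_zero]
    split_ifs with h
    · rw [one_mul, h.1, sub_self,
        show dotR a (emb (0:Z2)) = 0 by simp [dotR, emb], Real.exp_zero, ENNReal.ofReal_one]
    · rw [zero_mul]
  | succ n ih =>
    intro z₁ z₂
    rw [exitP_succ, exitP_succ]
    split_ifs with h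
    · rw [← ENNReal.tsum_mul_right]
      refine tsum_congr fun w => ?_
      have hsplit : ENNReal.ofReal (Real.exp (dotR a (emb (z₂ - z₁))))
          = ENNReal.ofReal (Real.exp (dotR a (emb (w - z₁))))
            * ENNReal.ofReal (Real.exp (dotR a (emb (z₂ - w)))) := by
        rw [← ENNReal.ofReal_mul (Real.exp_pos _).le, ← Real.exp_add]
        congr 2
        have hh : (w - z₁) + (z₂ - w) = z₂ - z₁ := by ring
        rw [← hh, emb_add, dotR_add_right]
      have hker0 : twKer γ 0 z₁ w * ENNReal.ofReal (Real.exp (dotR a (emb (w - z₁))))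
          = twKer γ a z₁ w := by
        simp only [twKer]
        rw [← ENNReal.ofReal_mul (mul_nonneg (hγ0 _) (Real.exp_pos _).le)]
        congr 1
        rw [show dotR (0:R2) (emb (w - z₁)) = 0 by simp [dotR], Real.exp_zero, mul_one]
      calc twKer γ 0 z₁ w * exitP (twKer γ 0) A n w z₂
            * ENNReal.ofReal (Real.exp (dotR a (emb (z₂ - z₁))))
          = (twKer γ 0 z₁ w * ENNReal.ofReal (Real.exp (dotR a (emb (w - z₁)))))
            * (exitP (twKer γ 0) A n w z₂
              * ENNReal.ofReal (Real.exp (dotR a (emb (z₂ - w))))) := by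
            rw [hsplit]; ring
        _ = twKer γ a z₁ w * exitP (twKer γ a) A n w z₂ := by rw [hker0, ih w z₂]
    · rw [zero_mul]

end Bridge2

/-- For `i = 1, 2` and `a = a(cᵢ)`: `ℙ_z(τ_a < ∞) = 1` for every `z ∈ K`;
equivalently `𝔼_z[e^{a·(S(τ)−z)}; τ < ∞] = 1`. -/
theorem boundary_twisted_exit_prob_one
    (γ : Z2 → ℝ) (c f : Fin 2 → R2) (K : Set R2)
    -- `γ` is a probability distribution on `ℤ²`
    (hγ0 : ∀ z : Z2, 0 ≤ γ z) (hγ1 : HasSum γ 1)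
    -- `c 0, c 1` are unit vectors, `f i` is the unit vector perpendicular to `c i`
    -- pointing into the cone; the angle between `c 0` and `c 1` lies in `(0, π)`
    (hcUnit : ∀ i, nrm (c i) = 1) (hfUnit : ∀ i, nrm (f i) = 1)
    (hperp : ∀ i, dotR (f i) (c i) = 0)
    (hinward : ∀ i j, i ≠ j → 0 < dotR (f i) (c j))
    -- `K` is the open convex cone bounded by the rays through `c 0` and `c 1`
    (hK : K = {x : R2 | ∀ i, 0 < dotR (f i) x})
    -- (A1) the walk is irreducible with nonzero mean
    (hA1 : ∀ z z' : Z2, ∃ n : ℕ, 0 < nstep (twKer γ 0) n z z')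
    (hmean : (∑' z : Z2, γ z * (z.1 : ℝ), ∑' z : Z2, γ z * (z.2 : ℝ)) ≠ (0, 0))
    -- (A2) the walk killed when leaving `K` is irreducible in `K`
    (hA2 : ∀ z z' : Z2, emb z ∈ K → emb z' ∈ K →
        ∃ n : ℕ, 0 < aliveP (twKer γ 0) (emb ⁻¹' K) n z z')
    -- (A3) the jump generating function is finite everywhere
    (hA3 : ∀ a : R2, Summable fun z : Z2 => γ z * Real.exp (dotR a (emb z)))
    -- (A4) the projections `fᵢ·S(n)` are aperiodic random walks
    (hA4 : ∀ i : Fin 2, ∀ d : ℕ,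
        (∀ n : ℕ, 0 < n →
          0 < ∑' z : Z2, (if dotR (f i) (emb z) = 0 then nstep (twKer γ 0) n 0 z else 0) →
          d ∣ n) → d = 1)
    (i : Fin 2)
    -- `a = a(cᵢ)`
    (a : R2) (haD : jgf γ a = 1) (haq : qmap γ a = c i)
    (z : Z2) (hz : emb z ∈ K) :
    exitTotal (twKer γ a) (emb ⁻¹' K) z = 1 ∧
    exitLExp (twKer γ 0) (emb ⁻¹' K) z
        (fun z' => Real.exp (dotR a (emb (z' - z)))) = 1 := by
  have hν0 : ∀ ξ : Z2, 0 ≤ γ ξ * Real.exp (dotR a (emb ξ)) :=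
    fun ξ => mul_nonneg (hγ0 ξ) (Real.exp_pos _).le
  have hνs : Summable (fun ξ : Z2 => γ ξ * Real.exp (dotR a (emb ξ))) := hA3 a
  have hν1 : ∑' ξ : Z2, γ ξ * Real.exp (dotR a (emb ξ)) = 1 := haD
  have htadd : ∀ v w : Z2, dotR (f i) (emb (v + w)) = dotR (f i) (emb v) + dotR (f i) (emb w) :=
    fun v w => tproj_add (f i) v w
  have hmom : ∀ cc : ℝ, Summable fun ξ : Z2 =>
      γ ξ * Real.exp (dotR a (emb ξ)) * Real.exp (cc * dotR (f i) (emb ξ)) := by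
    intro cc
    refine (hA3 (a + cc • (f i))).congr fun ξ => ?_
    rw [dotR_add_left, dotR_smul_left, Real.exp_add]
    ring
  have hmean0 : ∑' ξ : Z2, γ ξ * Real.exp (dotR a (emb ξ)) * dotR (f i) (emb ξ) = 0 :=
    mean_zero_proj γ hγ0 hA3 a (f i) (c i) haq (hperp i) (hcUnit i)
  have hmeans : Summable (fun ξ : Z2 => γ ξ * Real.exp (dotR a (emb ξ)) * dotR (f i) (emb ξ)) :=
    summable_coord γ hγ0 hA3 a (f i)
  obtain ⟨ξ₀, hξ₀, ht₀⟩ :=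
    exists_down_step γ hγ0 hA3 a (f i) (hfUnit i) hA1 hmean0
  have hhalf : ⨅ n : ℕ, ∑' w, aliveP (hker (fun ξ : Z2 => γ ξ * Real.exp (dotR a (emb ξ))))
      (hset (fun w : Z2 => dotR (f i) (emb w))) n z w = 0 :=
    halfplane_alive_iInf_zero (νR := fun ξ : Z2 => γ ξ * Real.exp (dotR a (emb ξ)))
      (t := fun w : Z2 => dotR (f i) (emb w)) (ξ₀ := ξ₀)
      hν0 hνs hν1 htadd hξ₀ ht₀ hmom hmeans hmean0 z
  have hsub : (emb ⁻¹' K) ⊆ hset (fun w : Z2 => dotR (f i) (emb w)) := by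
    intro w hw
    rw [Set.mem_preimage, hK] at hw
    exact hw i
  have halive : ⨅ n : ℕ, ∑' w, aliveP (twKer γ a) (emb ⁻¹' K) n z w = 0 := by
    refine le_antisymm ?_ (zero_le)
    rw [← hhalf]
    refine le_iInf fun n => (iInf_le _ n).trans ?_
    rw [twKer_eq_hker γ a]
    exact ENNReal.tsum_le_tsum fun w => aliveP_mono_set _ _ _ hsub n z w
  have hstoch : ∀ v, ∑' w, twKer γ a v w = 1 := by
    intro v
    rw [twKer_eq_hker γ a]
    exact hker_sum_one _ hν0 hνs hν1 v
  have h1 : exitTotal (twKer γ a) (emb ⁻¹' K) z = 1 :=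
    exitTotal_eq_one_of_alive_zero _ _ hstoch z halive
  refine ⟨h1, ?_⟩
  rw [exitLExp]
  calc ∑' n, ∑' z', exitP (twKer γ 0) (emb ⁻¹' K) n z z'
        * ENNReal.ofReal (Real.exp (dotR a (emb (z' - z))))
      = ∑' n, ∑' z', exitP (twKer γ a) (emb ⁻¹' K) n z z' :=
        tsum_congr fun n => tsum_congr fun z' => exitP_twist γ hγ0 a _ n z z'
    _ = 1 := h1
end KilledRW
end
end
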